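/- arXiv:1308.6342 — 9 statements merged into one kernel-verified Lean document; each statement's English description precedes it below -/
import Mathlib

section
/- Uniqueness of the normalized potential: Suppose a positive probability distribution p on configurations admits two representations p(x) = (1/Z)·exp(−Σ_c E_c(x_c)) and p(x) = (1/Z')·exp(−Σ_c E'_c(x_c)), where both sums range over all nonempty subsets c of S, Z > 0 and Z' > 0, and every E_c and every E'_c is a potential on c normalized with respect to zero. Then Z = Z' and E_c = E'_c for every nonempty subset c of S. -/
open Finset

/-- A potential `E` on the subset `c` of sites: a real-valued function of
configurations that depends only on the coordinates in `c`. -/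
def DependsOnlyOn {S : Type*} {V : S → Type*} (c : Finset S) (E : (∀ s, V s) → ℝ) : Prop :=
  ∀ x y : ∀ s, V s, (∀ s ∈ c, x s = y s) → E x = E y

/-- A potential is normalized with respect to zero if it vanishes on every
configuration having a zero coordinate inside `c`. -/
def NormalizedZero {S : Type*} {V : S → Type*} [∀ s, Zero (V s)] (c : Finset S)
    (E : (∀ s, V s) → ℝ) : Prop :=
  ∀ x : ∀ s, V s, (∃ t ∈ c, x t = 0) → E x = 0

section Aux

set_option linter.unusedSectionVars false

variable {S : Type*} [DecidableEq S] {V : S → Type*} [∀ s, Zero (V s)]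

/-- Replace coordinates outside `a` by zero. -/
def zeroOff (x : ∀ s, V s) (a : Finset S) : ∀ s, V s := fun s => if s ∈ a then x s else 0

lemma alt0 (s : Finset S) :
    (∑ b ∈ s.powerset, (-1 : ℝ) ^ (s.card - b.card)) = if s = ∅ then 1 else 0 := by
  have h : ∀ b ∈ s.powerset, (-1 : ℝ) ^ (s.card - b.card)
      = (-1 : ℝ) ^ s.card * (-1 : ℝ) ^ b.card := by
    intro b hb
    have hle : b.card ≤ s.card := card_le_card (mem_powerset.mp hb)
    have key : (-1 : ℝ) ^ (s.card - b.card) * (-1 : ℝ) ^ b.card = (-1 : ℝ) ^ s.card := by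
      rw [← pow_add, Nat.sub_add_cancel hle]
    calc (-1 : ℝ) ^ (s.card - b.card)
        = (-1 : ℝ) ^ (s.card - b.card) * ((-1 : ℝ) ^ b.card * (-1 : ℝ) ^ b.card) := by
          rw [← pow_add, ← two_mul, pow_mul]; norm_num
      _ = (-1 : ℝ) ^ s.card * (-1 : ℝ) ^ b.card := by rw [← mul_assoc, key]
  rw [Finset.sum_congr rfl h, ← Finset.mul_sum]
  have hz := Finset.sum_powerset_neg_one_pow_card (x := s)
  have h2 : (∑ b ∈ s.powerset, (-1 : ℝ) ^ b.card) = if s = ∅ then 1 else 0 := by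
    have := congrArg (fun z : ℤ => (z : ℝ)) hz
    push_cast at this
    simpa using this
  rw [h2]
  by_cases hs : s = ∅ <;> simp [hs]

lemma alt1 (c d : Finset S) (hdc : d ⊆ c) :
    (∑ a ∈ c.powerset.filter (fun a => d ⊆ a), (-1 : ℝ) ^ (c.card - a.card))
      = if d = c then 1 else 0 := by
  have hbij : (∑ a ∈ c.powerset.filter (fun a => d ⊆ a), (-1 : ℝ) ^ (c.card - a.card))
      = ∑ b ∈ (c \ d).powerset, (-1 : ℝ) ^ ((c \ d).card - b.card) := by
    refine Finset.sum_nbij' (fun a => a \ d) (fun b => b ∪ d) ?_ ?_ ?_ ?_ ?_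
    · intro a ha
      simp only [mem_filter, mem_powerset] at ha
      exact mem_powerset.mpr (sdiff_subset_sdiff ha.1 (Finset.Subset.refl d))
    · intro b hb
      simp only [mem_powerset] at hb
      simp only [mem_filter, mem_powerset]
      exact ⟨Finset.union_subset (hb.trans sdiff_subset) hdc, subset_union_right⟩
    · intro a ha
      simp only [mem_filter, mem_powerset] at ha
      exact Finset.sdiff_union_of_subset ha.2
    · intro b hb
      simp only [mem_powerset] at hb
      have : Disjoint b d := Finset.disjoint_of_subset_left hb sdiff_disjoint
      exact Finset.union_sdiff_cancel_right this
    · intro a ha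
      simp only [mem_filter, mem_powerset] at ha
      have h1 : a.card ≤ c.card := card_le_card ha.1
      have h2 : d.card ≤ a.card := card_le_card ha.2
      have hcard : (c \ d).card - (a \ d).card = c.card - a.card := by
        rw [card_sdiff_of_subset hdc, card_sdiff_of_subset ha.2]
        omega
      rw [hcard]
  rw [hbij, alt0]
  by_cases h : d = c
  · simp [h]
  · have hne : c \ d ≠ ∅ := by
      rw [Ne, sdiff_eq_empty_iff_subset]
      exact fun hcd => h (Finset.Subset.antisymm hdc hcd)
    simp [h, hne]

variable [Fintype S]

lemma key (E : Finset S → (∀ s, V s) → ℝ)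
    (hdep : ∀ c : Finset S, c.Nonempty → DependsOnlyOn c (E c))
    (hnorm : ∀ c : Finset S, c.Nonempty → NormalizedZero c (E c))
    (c : Finset S) (hc : c.Nonempty) (x : ∀ s, V s) :
    (∑ a ∈ c.powerset, (-1 : ℝ) ^ (c.card - a.card) *
      (∑ d ∈ Finset.univ.powerset.filter (fun d : Finset S => d.Nonempty), E d (zeroOff x a)))
      = E c x := by
  have hval : ∀ a ∈ c.powerset,
      ∀ d ∈ Finset.univ.powerset.filter (fun d : Finset S => d.Nonempty),
      E d (zeroOff x a) = if d ⊆ a then E d x else 0 := by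
    intro a _ d hd
    simp only [mem_filter] at hd
    by_cases hda : d ⊆ a
    · rw [if_pos hda]
      exact hdep d hd.2 _ _ (fun s hs => by simp [zeroOff, hda hs])
    · rw [if_neg hda]
      obtain ⟨t, ht, hta⟩ := Finset.not_subset.mp hda
      exact hnorm d hd.2 _ ⟨t, ht, by simp [zeroOff, hta]⟩
  calc (∑ a ∈ c.powerset, (-1 : ℝ) ^ (c.card - a.card) *
      (∑ d ∈ Finset.univ.powerset.filter (fun d : Finset S => d.Nonempty), E d (zeroOff x a)))
      = ∑ a ∈ c.powerset, ∑ d ∈ Finset.univ.powerset.filter (fun d : Finset S => d.Nonempty),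
          (-1 : ℝ) ^ (c.card - a.card) * (if d ⊆ a then E d x else 0) := by
        refine Finset.sum_congr rfl fun a ha => ?_
        rw [Finset.mul_sum]
        exact Finset.sum_congr rfl fun d hd => by rw [hval a ha d hd]
    _ = ∑ d ∈ Finset.univ.powerset.filter (fun d : Finset S => d.Nonempty),
          ∑ a ∈ c.powerset, (-1 : ℝ) ^ (c.card - a.card) * (if d ⊆ a then E d x else 0) :=
        Finset.sum_comm
    _ = ∑ d ∈ Finset.univ.powerset.filter (fun d : Finset S => d.Nonempty),
          (if d = c then 1 else 0) * E d x := by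
        refine Finset.sum_congr rfl fun d hd => ?_
        simp only [mem_filter] at hd
        by_cases hdc : d ⊆ c
        · have hh : (∑ a ∈ c.powerset, (-1 : ℝ) ^ (c.card - a.card) *
              (if d ⊆ a then E d x else 0))
              = (∑ a ∈ c.powerset.filter (fun a => d ⊆ a),
                  (-1 : ℝ) ^ (c.card - a.card)) * E d x := by
            rw [Finset.sum_mul, Finset.sum_filter]
            refine Finset.sum_congr rfl fun a _ => ?_
            by_cases h : d ⊆ a <;> simp [h]
          rw [hh, alt1 c d hdc]
        · have hzero : ∀ a ∈ c.powerset, (-1 : ℝ) ^ (c.card - a.card) *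
              (if d ⊆ a then E d x else 0) = 0 := by
            intro a ha
            have : ¬ d ⊆ a := fun h => hdc (h.trans (mem_powerset.mp ha))
            simp [this]
          rw [Finset.sum_congr rfl hzero, Finset.sum_const, smul_zero]
          have : d ≠ c := fun h => hdc (h ▸ Finset.Subset.refl c)
          simp [this]
    _ = E c x := by
        have hmem : c ∈ Finset.univ.powerset.filter (fun d : Finset S => d.Nonempty) := by
          simp [hc]
        rw [Finset.sum_eq_single_of_mem c hmem]
        · simp
        · intro d _ hd; simp [hd]

end Aux

/-- **Uniqueness of the normalized potential.** If a positive probability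
distribution `p` admits two Gibbs representations with potentials indexed by all
nonempty subsets of `S`, each normalized with respect to zero, then the partition
constants coincide and the potentials coincide on every nonempty subset. -/
theorem normalized_potential_uniqueness
    {S : Type*} [Fintype S] [DecidableEq S] {V : S → Type*}
    [∀ s, Fintype (V s)] [∀ s, Zero (V s)]
    (p : (∀ s, V s) → ℝ)
    (hp_pos : ∀ x, 0 < p x) (hp_sum : ∑ x, p x = 1)
    (Z Z' : ℝ) (hZ : 0 < Z) (hZ' : 0 < Z')
    (E E' : Finset S → (∀ s, V s) → ℝ)
    (hEdep : ∀ c : Finset S, c.Nonempty → DependsOnlyOn c (E c))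
    (hEnorm : ∀ c : Finset S, c.Nonempty → NormalizedZero c (E c))
    (hE'dep : ∀ c : Finset S, c.Nonempty → DependsOnlyOn c (E' c))
    (hE'norm : ∀ c : Finset S, c.Nonempty → NormalizedZero c (E' c))
    (hrep : ∀ x, p x = (1 / Z) *
      Real.exp (-(∑ c ∈ Finset.univ.powerset.filter (fun c : Finset S => c.Nonempty), E c x)))
    (hrep' : ∀ x, p x = (1 / Z') *
      Real.exp (-(∑ c ∈ Finset.univ.powerset.filter (fun c : Finset S => c.Nonempty), E' c x))) :
    Z = Z' ∧ ∀ c : Finset S, c.Nonempty → E c = E' c := by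
  have hF0 : (∑ c ∈ Finset.univ.powerset.filter (fun c : Finset S => c.Nonempty),
      E c (fun _ => 0)) = 0 := by
    refine Finset.sum_eq_zero fun c hc => ?_
    simp only [mem_filter] at hc
    obtain ⟨t, ht⟩ := hc.2
    exact hEnorm c hc.2 _ ⟨t, ht, rfl⟩
  have hF'0 : (∑ c ∈ Finset.univ.powerset.filter (fun c : Finset S => c.Nonempty),
      E' c (fun _ => 0)) = 0 := by
    refine Finset.sum_eq_zero fun c hc => ?_
    simp only [mem_filter] at hc
    obtain ⟨t, ht⟩ := hc.2
    exact hE'norm c hc.2 _ ⟨t, ht, rfl⟩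
  have hZZ' : Z = Z' := by
    have h1 := hrep (fun _ => 0)
    have h2 := hrep' (fun _ => 0)
    rw [hF0] at h1
    rw [hF'0] at h2
    simp only [neg_zero, Real.exp_zero, mul_one] at h1 h2
    have h3 : (1 : ℝ) / Z = 1 / Z' := h1 ▸ h2
    field_simp at h3
    linarith
  have hFF' : ∀ x, (∑ c ∈ Finset.univ.powerset.filter (fun c : Finset S => c.Nonempty), E c x)
      = (∑ c ∈ Finset.univ.powerset.filter (fun c : Finset S => c.Nonempty), E' c x) := by
    intro x
    have h1 := hrep x
    have h2 := hrep' x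
    rw [h1, hZZ'] at h2
    have h3 : Real.exp (-(∑ c ∈ Finset.univ.powerset.filter
          (fun c : Finset S => c.Nonempty), E c x))
        = Real.exp (-(∑ c ∈ Finset.univ.powerset.filter
          (fun c : Finset S => c.Nonempty), E' c x)) := by
      exact mul_left_cancel₀ (one_div_ne_zero (ne_of_gt hZ')) h2
    have := Real.exp_injective h3
    linarith
  refine ⟨hZZ', fun c hc => ?_⟩
  funext x
  have h1 := key E hEdep hEnorm c hc x
  have h2 := key E' hE'dep hE'norm c hc x
  rw [← h1, ← h2]
  exact Finset.sum_congr rfl fun a _ => by rw [hFF' (zeroOff x a)]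
end

section
/- Existence of the normalized potential: For every positive probability distribution p on configurations there exist a constant Z > 0 and, for each nonempty subset c ⊆ S, a potential E_c on c normalized with respect to zero, such that p(x) = (1/Z)·exp(−Σ_c E_c(x_c)) for every configuration x, where the sum ranges over all nonempty subsets c of S. -/
open Finset

lemma moebius_aux {α : Type*} [DecidableEq α] (a : Finset α) (h : Finset α → ℝ) :
    ∑ c ∈ a.powerset, ∑ b ∈ c.powerset, (-1:ℝ)^(c.card - b.card) * h b = h a := by
  rw [Finset.sum_comm' (s' := fun b => a.powerset.filter (fun c => b ⊆ c)) (t' := a.powerset)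
    (by intro c b
        simp only [mem_powerset, mem_filter]
        constructor
        · rintro ⟨h1, h2⟩; exact ⟨⟨h1, h2⟩, h2.trans h1⟩
        · rintro ⟨⟨h1, h2⟩, h3⟩; exact ⟨h1, h2⟩)]
  have key : ∀ b ∈ a.powerset,
      (∑ c ∈ a.powerset.filter (fun c => b ⊆ c), (-1:ℝ)^(c.card - b.card))
        = if b = a then 1 else 0 := by
    intro b hb
    rw [mem_powerset] at hb
    have h2 : ∑ c ∈ a.powerset.filter (fun c => b ⊆ c), (-1:ℝ)^(c.card - b.card)
        = ∑ d ∈ (a \ b).powerset, (-1:ℝ)^d.card := by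
      apply Finset.sum_nbij' (i := fun c => c \ b) (j := fun d => d ∪ b)
      · intro c hc; simp only [mem_powerset, mem_filter] at *
        exact sdiff_subset_sdiff hc.1 (Finset.Subset.refl b)
      · intro d hd; simp only [mem_powerset, mem_filter] at *
        exact ⟨union_subset (hd.trans (sdiff_subset)) hb, subset_union_right⟩
      · intro c hc; simp only [mem_powerset, mem_filter] at hc
        exact sdiff_union_of_subset hc.2
      · intro d hd; simp only [mem_powerset] at hd
        rw [union_sdiff_right]
        exact sdiff_eq_self_of_disjoint (disjoint_of_subset_left hd sdiff_disjoint)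
      · intro c hc; simp only [mem_powerset, mem_filter] at hc
        rw [card_sdiff_of_subset hc.2]
    have h3 : ∑ d ∈ (a \ b).powerset, (-1:ℝ)^d.card
        = ((∑ d ∈ (a \ b).powerset, (-1:ℤ)^d.card : ℤ) : ℝ) := by push_cast; rfl
    rw [h2, h3, Finset.sum_powerset_neg_one_pow_card]
    by_cases hba : b = a
    · simp [hba]
    · have : a \ b ≠ ∅ := by
        simp only [ne_eq, sdiff_eq_empty_iff_subset]
        exact fun hs => hba (subset_antisymm hb hs)
      simp [this, hba]
  calc ∑ b ∈ a.powerset, ∑ c ∈ a.powerset.filter (fun c => b ⊆ c), (-1:ℝ)^(c.card - b.card) * h b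
      = ∑ b ∈ a.powerset, (if b = a then 1 else 0) * h b := by
        refine Finset.sum_congr rfl fun b hb => ?_
        rw [← Finset.sum_mul, key b hb]
    _ = h a := by
        rw [Finset.sum_eq_single_of_mem a (mem_powerset_self a)]
        · simp
        · intro b _ hba; simp [hba]


/-- **Existence of the normalized potential.** Every positive probability
distribution on configurations admits a Gibbs representation
`p x = (1/Z) exp (−Σ_c E_c(x_c))`, with `Z > 0` and the sum ranging over all
nonempty subsets `c` of `S`, in which every potential `E_c` depends only on the
coordinates in `c` and is normalized with respect to zero. -/
theorem normalized_potential_existence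
    {S : Type*} [Fintype S] [DecidableEq S] {V : S → Type*}
    [∀ s, Fintype (V s)] [∀ s, Zero (V s)]
    (p : (∀ s, V s) → ℝ)
    (hp_pos : ∀ x, 0 < p x) (hp_sum : ∑ x, p x = 1) :
    ∃ (Z : ℝ) (E : Finset S → (∀ s, V s) → ℝ), 0 < Z ∧
      (∀ c : Finset S, c.Nonempty → DependsOnlyOn c (E c)) ∧
      (∀ c : Finset S, c.Nonempty → NormalizedZero c (E c)) ∧
      (∀ x, p x = (1 / Z) *
        Real.exp (-(∑ c ∈ Finset.univ.powerset.filter (fun c : Finset S => c.Nonempty), E c x))) := by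

  classical
  set z : ∀ s, V s := fun _ => 0 with hz
  set r : Finset S → (∀ s, V s) → (∀ s, V s) := fun b x s => if s ∈ b then x s else 0 with hr
  set g : (∀ s, V s) → ℝ := fun x => Real.log (p z) - Real.log (p x) with hg
  set E : Finset S → (∀ s, V s) → ℝ :=
    fun c x => ∑ b ∈ c.powerset, (-1:ℝ)^(c.card - b.card) * g (r b x) with hE
  have hr_empty : ∀ x, r ∅ x = z := by intro x; funext s; simp [hr, hz]
  have hg_z : g z = 0 := by simp [hg]
  refine ⟨1 / p z, E, div_pos one_pos (hp_pos z), ?_, ?_, ?_⟩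
  · -- depends only on c
    intro c _ x y hxy
    refine Finset.sum_congr rfl fun b hb => ?_
    rw [mem_powerset] at hb
    have : r b x = r b y := by
      funext s
      by_cases hs : s ∈ b
      · simp [hr, hs, hxy s (hb hs)]
      · simp [hr, hs]
    rw [this]
  · -- normalized w.r.t. zero
    intro c _ x ⟨t, htc, hxt⟩
    have hc : c = insert t (c.erase t) := (insert_erase htc).symm
    have htn : t ∉ c.erase t := notMem_erase t c
    rw [hE]
    simp only
    rw [hc, powerset_insert, Finset.sum_union, Finset.sum_image, ← Finset.sum_add_distrib]
    · apply Finset.sum_eq_zero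
      intro b hb
      rw [mem_powerset] at hb
      have htb : t ∉ b := fun h => htn (hb h)
      have hrr : r (insert t b) x = r b x := by
        funext s
        by_cases hs : s = t
        · subst hs; simp [hr, htb, hxt]
        · by_cases hsb : s ∈ b <;> simp [hr, hsb, hs]
      rw [hrr, card_insert_of_notMem htb]
      have h1 : (insert t (c.erase t)).card - b.card
          = ((insert t (c.erase t)).card - (b.card + 1)) + 1 := by
        rw [card_insert_of_notMem htn]
        have := card_le_card hb
        omega
      rw [h1, pow_succ]
      ring
    · intro b₁ hb₁ b₂ hb₂ hins
      rw [mem_coe, mem_powerset] at hb₁ hb₂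
      have h1 : b₁ = (insert t b₁).erase t := by
        rw [erase_insert (fun h => htn (hb₁ h))]
      have h2 : b₂ = (insert t b₂).erase t := by
        rw [erase_insert (fun h => htn (hb₂ h))]
      rw [h1, h2, hins]
    · rw [Finset.disjoint_left]
      rintro b hb₁ hb₂
      rw [mem_powerset] at hb₁
      rw [mem_image] at hb₂
      obtain ⟨b', _, rfl⟩ := hb₂
      exact htn (hb₁ (mem_insert_self t b'))
  · -- Gibbs representation
    intro x
    have hsum : ∑ c ∈ Finset.univ.powerset.filter (fun c : Finset S => c.Nonempty), E c x
        = g x := by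
      have h0 : ∑ c ∈ Finset.univ.powerset.filter
            (fun c : Finset S => ¬ c.Nonempty), E c x = 0 := by
        apply Finset.sum_eq_zero
        intro c hc
        rw [mem_filter, not_nonempty_iff_eq_empty] at hc
        rw [hc.2, hE]
        simp [hr_empty, hg_z]
      have hsplit := Finset.sum_filter_add_sum_filter_not
        (Finset.univ.powerset : Finset (Finset S)) (fun c => c.Nonempty) (fun c => E c x)
      have hfull : ∑ c ∈ (Finset.univ : Finset S).powerset, E c x = g (r univ x) :=
        moebius_aux univ (fun b => g (r b x))
      have hru : r univ x = x := by funext s; simp [hr]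
      rw [hru] at hfull
      rw [h0, add_zero] at hsplit
      rw [hsplit, hfull]
    rw [hsum, hg]
    rw [one_div_one_div, neg_sub, Real.exp_sub, Real.exp_log (hp_pos x),
      Real.exp_log (hp_pos z)]
    field_simp
    rw [mul_div_assoc, div_self (ne_of_gt (hp_pos z)), mul_one]
end

section
/- Marginal factorization over a 1-neighborhood: Let p be a positive Gibbs distribution over C with potentials (E_c)_{c∈C} and partition constant Z, and fix q ∈ C with 1-neighborhood A_q. Then every c ∈ C with c ∩ q ≠ ∅ satisfies c ⊆ A_q, and there exists a strictly positive real-valued function h of configurations of A_q that depends only on the coordinates in A_q∖q, such that the marginal of p on A_q satisfies p_{A_q}(y) = (1/Z)·exp(−Σ_{c∈C, c⊆A_q} E_c(y_c))·h(y) for every configuration y of A_q. -/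
open Finset

/-- The marginal of `p` on `U`: `p_U(y) = Σ { p x : x_U = y }`. -/
def marginal {S : Type*} {V : S → Type*} [Fintype S] [DecidableEq S]
    [∀ s, Fintype (V s)] [∀ s, DecidableEq (V s)]
    (p : (∀ s, V s) → ℝ) (U : Finset S) (y : ∀ s : U, V s) : ℝ :=
  ∑ x ∈ Finset.univ.filter (fun x : ∀ s, V s => ∀ s : U, x s.1 = y s), p x

/-- A potential on `c ⊆ A`, viewed as a function of configurations of `A`:
it depends only on the coordinates in `c`. -/
def DependsOnlyOnSub {S : Type*} {V : S → Type*} (A c : Finset S)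
    (F : (∀ s : A, V s) → ℝ) : Prop :=
  ∀ y z : ∀ s : A, V s, (∀ s : A, s.1 ∈ c → y s = z s) → F y = F z

/-- Zero-normalization for a potential on `c ⊆ A` viewed as a function of
configurations of `A`. -/
def NormalizedZeroSub {S : Type*} {V : S → Type*} [∀ s, Zero (V s)] (A c : Finset S)
    (F : (∀ s : A, V s) → ℝ) : Prop :=
  ∀ y : ∀ s : A, V s, (∃ s : A, s.1 ∈ c ∧ y s = 0) → F y = 0

/-- Extension of a configuration of `A` to a full configuration, by zero. -/
def extendZero {S : Type*} {V : S → Type*} [∀ s, Zero (V s)] [DecidableEq S]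
    (A : Finset S) (y : ∀ s : A, V s) : ∀ s, V s :=
  fun s => if h : s ∈ A then y ⟨s, h⟩ else 0

/-- **Marginal factorization over a 1-neighborhood.** For a positive Gibbs
distribution `p` over the clique system `C` with potentials `E_c` and partition
constant `Z`, and a clique `q ∈ C` with 1-neighborhood `A = ⋃ {c ∈ C : c ∩ q ≠ ∅}`:
every clique meeting `q` is contained in `A`, and the marginal of `p` on `A`
factors as `(1/Z) · exp(−Σ_{c ∈ C, c ⊆ A} E_c(y_c)) · h(y)` for some strictly
positive function `h` of configurations of `A` depending only on the coordinates
in `A \ q`. -/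
theorem marginal_factorization_over_one_neighborhood
    {S : Type*} [Fintype S] [DecidableEq S] {V : S → Type*}
    [∀ s, Fintype (V s)] [∀ s, DecidableEq (V s)] [∀ s, Zero (V s)]
    (C : Finset (Finset S)) (hC : ∀ c ∈ C, c.Nonempty)
    (E : Finset S → (∀ s, V s) → ℝ)
    (hEdep : ∀ c ∈ C, DependsOnlyOn c (E c))
    (Z : ℝ) (hZ : 0 < Z)
    (p : (∀ s, V s) → ℝ)
    (hp : ∀ x, p x = (1 / Z) * Real.exp (-(∑ c ∈ C, E c x)))
    (hp_sum : ∑ x, p x = 1)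
    (q : Finset S) (hq : q ∈ C)
    (A : Finset S) (hA : A = (C.filter fun c => (c ∩ q).Nonempty).biUnion id) :
    (∀ c ∈ C, (c ∩ q).Nonempty → c ⊆ A) ∧
    ∃ h : (∀ s : A, V s) → ℝ,
      (∀ y, 0 < h y) ∧ DependsOnlyOnSub A (A \ q) h ∧
      ∀ y : ∀ s : A, V s,
        marginal p A y =
          (1 / Z) * Real.exp (-(∑ c ∈ C.filter (fun c => c ⊆ A), E c (extendZero A y))) * h y := by
  have hsub : ∀ c ∈ C, (c ∩ q).Nonempty → c ⊆ A := by
    intro c hc hcq s hs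
    rw [hA]
    exact Finset.mem_biUnion.mpr ⟨c, Finset.mem_filter.mpr ⟨hc, hcq⟩, hs⟩
  refine ⟨hsub, ?_⟩
  have hdisj : ∀ c ∈ C, ¬ c ⊆ A → ∀ s ∈ c, s ∉ q := by
    intro c hc hns s hs hsq
    exact hns (hsub c hc ⟨s, Finset.mem_inter.mpr ⟨hs, hsq⟩⟩)
  refine ⟨fun y => ∑ x ∈ Finset.univ.filter (fun x : ∀ s, V s => ∀ s : A, x s.1 = y s),
      Real.exp (-(∑ c ∈ C.filter (fun c => ¬ c ⊆ A), E c x)), ?_, ?_, ?_⟩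
  · intro y
    apply Finset.sum_pos
    · intro x _; exact Real.exp_pos _
    · exact ⟨extendZero A y, Finset.mem_filter.mpr ⟨Finset.mem_univ _,
        fun s => by simp [extendZero, s.2]⟩⟩
  · intro y z hyz
    refine Finset.sum_bij' (fun x _ => fun s => if h : s ∈ A then z ⟨s, h⟩ else x s)
      (fun x _ => fun s => if h : s ∈ A then y ⟨s, h⟩ else x s) ?_ ?_ ?_ ?_ ?_
    · intro x hx
      refine Finset.mem_filter.mpr ⟨Finset.mem_univ _, fun s => ?_⟩
      simp [s.2]
    · intro x hx
      refine Finset.mem_filter.mpr ⟨Finset.mem_univ _, fun s => ?_⟩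
      simp [s.2]
    · intro x hx
      have hxy := (Finset.mem_filter.mp hx).2
      funext s
      by_cases hs : s ∈ A
      · simp [hs, hxy ⟨s, hs⟩]
      · simp [hs]
    · intro x hx
      have hxz := (Finset.mem_filter.mp hx).2
      funext s
      by_cases hs : s ∈ A
      · simp [hs, hxz ⟨s, hs⟩]
      · simp [hs]
    · intro x hx
      have hxy := (Finset.mem_filter.mp hx).2
      congr 2
      refine Finset.sum_congr rfl fun c hc => ?_
      obtain ⟨hcC, hcA⟩ := Finset.mem_filter.mp hc
      refine hEdep c hcC _ _ fun s hs => ?_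
      by_cases hsA : s ∈ A
      · have hsq : s ∉ q := hdisj c hcC hcA s hs
        simp only [dif_pos hsA]
        rw [← hyz ⟨s, hsA⟩ (Finset.mem_sdiff.mpr ⟨hsA, hsq⟩)]
        exact hxy ⟨s, hsA⟩
      · simp [hsA]
  · intro y
    unfold marginal
    rw [mul_assoc, Finset.mul_sum, Finset.mul_sum]
    refine Finset.sum_congr rfl fun x hx => ?_
    have hxy := (Finset.mem_filter.mp hx).2
    have hsum : ∑ c ∈ C.filter (fun c => c ⊆ A), E c x
        = ∑ c ∈ C.filter (fun c => c ⊆ A), E c (extendZero A y) := by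
      refine Finset.sum_congr rfl fun c hc => ?_
      obtain ⟨hcC, hcA⟩ := Finset.mem_filter.mp hc
      refine hEdep c hcC _ _ fun s hs => ?_
      have hsA : s ∈ A := hcA hs
      simp [extendZero, hsA, hxy ⟨s, hsA⟩]
    rw [hp x, ← Finset.sum_filter_add_sum_filter_not C (fun c => c ⊆ A) (fun c => E c x),
      hsum, neg_add, Real.exp_add]
end

section
/- The LAP argument: Let p be a positive Gibbs distribution over C with potentials (E_c)_{c∈C}, each normalized with respect to zero, and fix q ∈ C with 1-neighborhood A_q. Write the marginal p_{A_q} in its (unique) zero-normalized form p_{A_q}(y) = (1/Z')·exp(−Σ_c F_c(y_c)), where the sum ranges over all nonempty subsets c of A_q, Z' > 0, and each F_c is a potential on c normalized with respect to zero. Then F_q = E_q, i.e., the normalized potential that the marginal assigns to the clique q coincides with the normalized potential that the joint distribution assigns to q. -/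
open Finset

lemma lap_pow_card_sum {α : Type*} [DecidableEq α] (r : Finset α) :
    ∑ d ∈ r.powerset, (-1:ℝ)^d.card = if r = ∅ then 1 else 0 := by
  have h := Finset.sum_powerset_neg_one_pow_card (x := r)
  have : ((∑ m ∈ r.powerset, (-1 : ℤ) ^ m.card : ℤ) : ℝ)
      = ∑ d ∈ r.powerset, (-1:ℝ)^d.card := by push_cast; rfl
  rw [← this, h]
  split <;> norm_num

lemma lap_alt_sum {α : Type*} [DecidableEq α] (q c : Finset α) (hc : c ⊆ q) :
    ∑ b ∈ q.powerset.filter (fun b => c ⊆ b), (-1:ℝ)^((q \ b).card)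
      = if c = q then 1 else 0 := by
  have key : ∑ b ∈ q.powerset.filter (fun b => c ⊆ b), (-1:ℝ)^((q \ b).card)
      = ∑ d ∈ (q \ c).powerset, (-1:ℝ)^d.card := by
    refine Finset.sum_bij' (fun b _ => q \ b) (fun d _ => q \ d) ?_ ?_ ?_ ?_ ?_
    · intro b hb
      simp only [mem_filter, mem_powerset] at hb
      exact mem_powerset.2 (sdiff_subset_sdiff le_rfl hb.2)
    · intro d hd
      simp only [mem_powerset] at hd
      simp only [mem_filter, mem_powerset]
      refine ⟨sdiff_subset, fun s hs => ?_⟩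
      simp only [mem_sdiff]
      refine ⟨hc hs, fun hsd => ?_⟩
      exact (mem_sdiff.1 (hd hsd)).2 hs
    · intro b hb
      simp only [mem_filter, mem_powerset] at hb
      exact Finset.sdiff_sdiff_eq_self hb.1
    · intro d hd
      simp only [mem_powerset] at hd
      exact Finset.sdiff_sdiff_eq_self (hd.trans sdiff_subset)
    · intro b hb; rfl
  rw [key, lap_pow_card_sum]
  by_cases h : c = q
  · simp [h]
  · rw [if_neg h, if_neg (fun he => h (subset_antisymm hc (Finset.sdiff_eq_empty_iff_subset.1 he)))]

lemma lap_mobius {α : Type*} [DecidableEq α] (q : Finset α) (D : Finset (Finset α))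
    (hqD : q ∈ D) (f : Finset α → Finset α → ℝ)
    (hf : ∀ c ∈ D, ∀ b ⊆ q, f c b = if c ⊆ b then f c q else 0) :
    ∑ b ∈ q.powerset, (-1:ℝ)^((q \ b).card) * ∑ c ∈ D, f c b = f q q := by
  have h1 : ∀ b ∈ q.powerset, (-1:ℝ)^((q \ b).card) * ∑ c ∈ D, f c b
      = ∑ c ∈ D, (-1:ℝ)^((q \ b).card) * f c b := fun b _ => Finset.mul_sum _ _ _
  rw [Finset.sum_congr rfl h1, Finset.sum_comm]
  have h2 : ∀ c ∈ D, ∑ b ∈ q.powerset, (-1:ℝ)^((q \ b).card) * f c b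
      = if c = q then f c q else 0 := by
    intro c hc
    have : ∀ b ∈ q.powerset, (-1:ℝ)^((q \ b).card) * f c b
        = if c ⊆ b then (-1:ℝ)^((q \ b).card) * f c q else 0 := by
      intro b hb
      rw [hf c hc b (mem_powerset.1 hb)]
      split <;> simp
    rw [Finset.sum_congr rfl this, Finset.sum_ite, Finset.sum_const_zero, add_zero,
      ← Finset.sum_mul]
    by_cases hcq : c ⊆ q
    · rw [lap_alt_sum q c hcq]
      split <;> simp
    · have : q.powerset.filter (fun b => c ⊆ b) = ∅ := by
        refine Finset.filter_eq_empty_iff.2 fun b hb hcb => hcq (hcb.trans (mem_powerset.1 hb))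
      rw [this, Finset.sum_empty, zero_mul, if_neg (fun h => hcq (le_of_eq h))]
  rw [Finset.sum_congr rfl h2, Finset.sum_ite_eq' D q (fun c => f c q), if_pos hqD]

/-- **The LAP argument.** Let `p` be a positive Gibbs distribution over `C` whose
potentials `E_c` are normalized with respect to zero, let `q ∈ C` have
1-neighborhood `A`, and write the marginal of `p` on `A` in zero-normalized form
with partition constant `Z' > 0` and potentials `F_c` over all nonempty subsets
`c ⊆ A`. Then the potential that the marginal assigns to `q` coincides with the
potential that the joint distribution assigns to `q`: `F_q(x_A) = E_q(x)` for
every configuration `x`. -/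
theorem lap_argument
    {S : Type*} [Fintype S] [DecidableEq S] {V : S → Type*}
    [∀ s, Fintype (V s)] [∀ s, DecidableEq (V s)] [∀ s, Zero (V s)]
    (C : Finset (Finset S)) (hC : ∀ c ∈ C, c.Nonempty)
    (E : Finset S → (∀ s, V s) → ℝ)
    (hEdep : ∀ c ∈ C, DependsOnlyOn c (E c))
    (hEnorm : ∀ c ∈ C, NormalizedZero c (E c))
    (Z : ℝ) (hZ : 0 < Z)
    (p : (∀ s, V s) → ℝ)
    (hp : ∀ x, p x = (1 / Z) * Real.exp (-(∑ c ∈ C, E c x)))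
    (hp_sum : ∑ x, p x = 1)
    (q : Finset S) (hq : q ∈ C)
    (A : Finset S) (hA : A = (C.filter fun c => (c ∩ q).Nonempty).biUnion id)
    (Z' : ℝ) (hZ' : 0 < Z')
    (F : Finset S → (∀ s : A, V s) → ℝ)
    (hFdep : ∀ c : Finset S, c ⊆ A → c.Nonempty → DependsOnlyOnSub A c (F c))
    (hFnorm : ∀ c : Finset S, c ⊆ A → c.Nonempty → NormalizedZeroSub A c (F c))
    (hFrep : ∀ y : ∀ s : A, V s,
      marginal p A y =
        (1 / Z') * Real.exp (-(∑ c ∈ A.powerset.filter (fun c => c.Nonempty), F c y))) :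
    ∀ x : ∀ s, V s, F q (A.restrict x) = E q x := by
  classical
  intro x
  have hqne : q.Nonempty := hC q hq
  have hqCq : q ∈ C.filter (fun c => (c ∩ q).Nonempty) := by
    simp only [mem_filter, inter_self]; exact ⟨hq, hqne⟩
  have hqA : q ⊆ A := by
    rw [hA]; exact subset_biUnion_of_mem id hqCq
  -- the configuration with coordinates outside `b` zeroed
  set xb : Finset S → ∀ s, V s := fun b s => if s ∈ b then x s else 0 with hxbdef
  set Cq : Finset (Finset S) := C.filter (fun c => (c ∩ q).Nonempty) with hCqdef
  have hCqA : ∀ c ∈ Cq, c ⊆ A := fun c hc => by rw [hA]; exact subset_biUnion_of_mem id hc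
  set T : Finset S → ℝ := fun b => ∑ c ∈ Cq, E c (xb b) with hTdef
  set Sb : Finset S → Finset (∀ s, V s) :=
    fun b => univ.filter (fun z : ∀ s, V s => ∀ s : A, z s.1 = A.restrict (xb b) s) with hSbdef
  set W : Finset S → ℝ :=
    fun b => ∑ z ∈ Sb b, Real.exp (-(∑ c ∈ C.filter (fun c => ¬(c ∩ q).Nonempty), E c z))
    with hWdef
  have hres : ∀ (w : ∀ s, V s) (s : A), A.restrict w s = w s.1 := fun w s => rfl
  have hSbmem : ∀ b z, z ∈ Sb b ↔ ∀ s : A, z s.1 = xb b s.1 := by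
    intro b z
    simp only [hSbdef, mem_filter, mem_univ, true_and]
    exact Iff.rfl
  -- factorization of the marginal
  have hM : ∀ b, b ⊆ q → marginal p A (A.restrict (xb b))
      = (1 / Z) * Real.exp (-(T b)) * W b := by
    intro b hb
    have h1 : marginal p A (A.restrict (xb b)) = ∑ z ∈ Sb b, p z := by
      unfold marginal
      rfl
    rw [h1, hWdef, Finset.mul_sum]
    refine Finset.sum_congr rfl fun z hz => ?_
    have hzmem : ∀ s : A, z s.1 = xb b s.1 := (hSbmem b z).1 hz
    have hsplit : ∑ c ∈ C, E c z
        = T b + ∑ c ∈ C.filter (fun c => ¬(c ∩ q).Nonempty), E c z := by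
      rw [← Finset.sum_filter_add_sum_filter_not C (fun c => (c ∩ q).Nonempty)]
      congr 1
      refine Finset.sum_congr rfl fun c hc => ?_
      exact hEdep c (mem_filter.1 hc).1 z (xb b) (fun s hs => hzmem ⟨s, hCqA c hc hs⟩)
    rw [hp z, hsplit, neg_add, Real.exp_add]
    ring
  -- W is independent of b
  have hW : ∀ b, b ⊆ q → W b = W q := by
    intro b hb
    rw [hWdef]
    refine Finset.sum_bij' (fun z _ => fun s => if s ∈ A then xb q s else z s)
      (fun z _ => fun s => if s ∈ A then xb b s else z s) ?_ ?_ ?_ ?_ ?_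
    · intro z hz
      refine (hSbmem q _).2 fun s => ?_
      simp [s.2]
    · intro z hz
      refine (hSbmem b _).2 fun s => ?_
      simp [s.2]
    · intro z hz
      have hzmem := (hSbmem b z).1 hz
      funext s
      by_cases hs : s ∈ A
      · simp only [hs, if_pos]
        exact (hzmem ⟨s, hs⟩).symm
      · simp [hs]
    · intro z hz
      have hzmem := (hSbmem q z).1 hz
      funext s
      by_cases hs : s ∈ A
      · simp only [hs, if_pos]
        exact (hzmem ⟨s, hs⟩).symm
      · simp [hs]
    · intro z hz
      congr 1
      congr 1
      refine Finset.sum_congr rfl fun c hc => ?_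
      obtain ⟨hcC, hcq⟩ := mem_filter.1 hc
      have hcq' : ∀ s ∈ c, s ∉ q := by
        intro s hs hsq
        exact hcq ⟨s, mem_inter.2 ⟨hs, hsq⟩⟩
      refine hEdep c hcC z _ (fun s hs => ?_)
      by_cases hsA : s ∈ A
      · have hzmem := (hSbmem b z).1 hz
        have h1 : z s = xb b s := hzmem ⟨s, hsA⟩
        have h2 : xb b s = 0 := by
          simp only [hxbdef]
          rw [if_neg (fun hsb => hcq' s hs (hb hsb))]
        have h3 : xb q s = 0 := by
          simp only [hxbdef]
          rw [if_neg (hcq' s hs)]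
        simp [hsA, h1, h2, h3]
      · simp [hsA]
  have hWqpos : 0 < W q := by
    rw [hWdef]
    refine Finset.sum_pos (fun z _ => Real.exp_pos _) ⟨xb q, ?_⟩
    exact (hSbmem q _).2 fun s => rfl
  -- logs of the marginal, two ways
  set L : Finset S → ℝ := fun b => Real.log (marginal p A (A.restrict (xb b))) with hLdef
  have hLF : ∀ b, b ⊆ q → L b
      = -Real.log Z' - ∑ c ∈ A.powerset.filter (fun c => c.Nonempty), F c (A.restrict (xb b)) := by
    intro b hb
    rw [hLdef]
    simp only [hFrep, one_div]
    rw [Real.log_mul (inv_ne_zero hZ'.ne') (Real.exp_ne_zero _), Real.log_inv, Real.log_exp]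
    ring
  have hLE : ∀ b, b ⊆ q → L b = (-Real.log Z + Real.log (W q)) - T b := by
    intro b hb
    rw [hLdef]
    simp only []
    rw [hM b hb, hW b hb, Real.log_mul (by positivity) hWqpos.ne',
      Real.log_mul (by positivity) (Real.exp_ne_zero _), Real.log_exp, one_div, Real.log_inv]
    ring
  have hsum0 : ∑ b ∈ q.powerset, (-1:ℝ)^((q \ b).card) = 0 := by
    have h := lap_alt_sum q ∅ (empty_subset q)
    rw [Finset.filter_true_of_mem (fun b _ => empty_subset b)] at h
    rw [h, if_neg (fun h0 => hqne.ne_empty h0.symm)]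
  -- F-side Möbius
  have hFmob : ∑ b ∈ q.powerset, (-1:ℝ)^((q \ b).card)
      * ∑ c ∈ A.powerset.filter (fun c => c.Nonempty), F c (A.restrict (xb b))
      = F q (A.restrict x) := by
    have hmob := lap_mobius q (A.powerset.filter (fun c => c.Nonempty))
      (mem_filter.2 ⟨mem_powerset.2 hqA, hqne⟩)
      (fun c b => F c (A.restrict (xb b))) ?_
    · rw [hmob]
      refine hFdep q hqA hqne _ _ (fun s hs => ?_)
      simp only [hres, hxbdef]
      rw [if_pos hs]
    · intro c hc b hb
      obtain ⟨hcA', hcne⟩ := mem_filter.1 hc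
      have hcA := mem_powerset.1 hcA'
      by_cases hcb : c ⊆ b
      · rw [if_pos hcb]
        refine hFdep c hcA hcne _ _ (fun s hs => ?_)
        simp only [hres, hxbdef]
        rw [if_pos (hcb hs), if_pos (hb (hcb hs))]
      · rw [if_neg hcb]
        obtain ⟨t, htc, htb⟩ := Finset.not_subset.1 hcb
        refine hFnorm c hcA hcne _ ⟨⟨t, hcA htc⟩, htc, ?_⟩
        simp only [hres, hxbdef]
        rw [if_neg htb]
  -- E-side Möbius
  have hEmob : ∑ b ∈ q.powerset, (-1:ℝ)^((q \ b).card) * T b = E q x := by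
    have hmob := lap_mobius q Cq hqCq (fun c b => E c (xb b)) ?_
    · rw [hTdef]
      rw [hmob]
      refine hEdep q hq _ _ (fun s hs => ?_)
      simp only [hxbdef]
      rw [if_pos hs]
    · intro c hc b hb
      have hcC := (mem_filter.1 hc).1
      by_cases hcb : c ⊆ b
      · rw [if_pos hcb]
        refine hEdep c hcC _ _ (fun s hs => ?_)
        simp only [hxbdef]
        rw [if_pos (hcb hs), if_pos (hb (hcb hs))]
      · rw [if_neg hcb]
        obtain ⟨t, htc, htb⟩ := Finset.not_subset.1 hcb
        refine hEnorm c hcC _ ⟨t, htc, ?_⟩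
        simp only [hxbdef]
        rw [if_neg htb]
  -- combine
  have hFs : ∑ b ∈ q.powerset, (-1:ℝ)^((q \ b).card) * L b = -(F q (A.restrict x)) := by
    have : ∀ b ∈ q.powerset, (-1:ℝ)^((q \ b).card) * L b
        = (-1:ℝ)^((q \ b).card) * (-Real.log Z')
          - (-1:ℝ)^((q \ b).card)
            * ∑ c ∈ A.powerset.filter (fun c => c.Nonempty), F c (A.restrict (xb b)) := by
      intro b hb
      rw [hLF b (mem_powerset.1 hb)]; ring
    rw [Finset.sum_congr rfl this, Finset.sum_sub_distrib, ← Finset.sum_mul, hsum0, zero_mul,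
      zero_sub, hFmob]
  have hEs : ∑ b ∈ q.powerset, (-1:ℝ)^((q \ b).card) * L b = -(E q x) := by
    have : ∀ b ∈ q.powerset, (-1:ℝ)^((q \ b).card) * L b
        = (-1:ℝ)^((q \ b).card) * (-Real.log Z + Real.log (W q))
          - (-1:ℝ)^((q \ b).card) * T b := by
      intro b hb
      rw [hLE b (mem_powerset.1 hb)]; ring
    rw [Finset.sum_congr rfl this, Finset.sum_sub_distrib, ← Finset.sum_mul, hsum0, zero_mul,
      zero_sub, hEmob]
  have := hFs.symm.trans hEs
  linarith
end

section
/- Clique-marginal matching implies maximum likelihood (Lemma 1): Let p̃ be a probability distribution on configurations and let F be the set of all positive Gibbs distributions over C. If p̂ ∈ F satisfies p̂_c = p̃_c (equality of marginals on c) for every c ∈ C, then p̂ maximizes the expected log-likelihood over F: for every p ∈ F, Σ_x p̃(x)·log p(x) ≤ Σ_x p̃(x)·log p̂(x). -/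
open Finset

/-- `p` is a (positive, normalized) Gibbs distribution over the clique system `C`:
`p x = (1/Z) exp (−Σ_{c ∈ C} E_c(x_c))` for some partition constant `Z > 0` and
potentials `E_c` depending only on the coordinates in `c`, and `p` sums to one. -/
def IsGibbsDistribution {S : Type*} {V : S → Type*} [Fintype S] [DecidableEq S]
    [∀ s, Fintype (V s)] (C : Finset (Finset S)) (p : (∀ s, V s) → ℝ) : Prop :=
  ∃ (E : Finset S → (∀ s, V s) → ℝ) (Z : ℝ), 0 < Z ∧
    (∀ c ∈ C, DependsOnlyOn c (E c)) ∧
    (∀ x, p x = (1 / Z) * Real.exp (-(∑ c ∈ C, E c x))) ∧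
    (∑ x, p x = 1)

/-- If two distributions have equal marginals on `c`, then the expectations of any
potential depending only on `c` agree. -/
lemma sum_mul_eq_of_marginal_eq {S : Type*} [Fintype S] [DecidableEq S] {V : S → Type*}
    [∀ s, Fintype (V s)] [∀ s, DecidableEq (V s)]
    (c : Finset S) (p q : (∀ s, V s) → ℝ)
    (h : ∀ y : ∀ s : c, V s, marginal p c y = marginal q c y)
    (f : (∀ s, V s) → ℝ) (hf : DependsOnlyOn c f) :
    ∑ x, p x * f x = ∑ x, q x * f x := by
  classical
  have hconstsum : ∀ (A : Finset (∀ s, V s)), (∀ x ∈ A, ∀ x' ∈ A, f x = f x') →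
      (∑ x ∈ A, p x = ∑ x ∈ A, q x) → ∑ x ∈ A, p x * f x = ∑ x ∈ A, q x * f x := by
    intro A hfA hsum
    rcases A.eq_empty_or_nonempty with h0 | ⟨x0, hx0⟩
    · simp [h0]
    · calc ∑ x ∈ A, p x * f x
          = ∑ x ∈ A, p x * f x0 :=
            Finset.sum_congr rfl fun x hx => by rw [hfA x hx x0 hx0]
        _ = (∑ x ∈ A, p x) * f x0 := (Finset.sum_mul _ _ _).symm
        _ = (∑ x ∈ A, q x) * f x0 := by rw [hsum]
        _ = ∑ x ∈ A, q x * f x0 := Finset.sum_mul _ _ _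
        _ = ∑ x ∈ A, q x * f x :=
            Finset.sum_congr rfl fun x hx => by rw [hfA x0 hx0 x hx]
  have hfib : ∀ r : (∀ s, V s) → ℝ,
      ∑ x, r x * f x
        = ∑ y : ∀ s : c, V s,
            ∑ x ∈ Finset.univ.filter (fun x : ∀ s, V s => ∀ s : c, x s.1 = y s), r x * f x := by
    intro r
    rw [← Finset.sum_fiberwise Finset.univ (fun x (s : c) => x s.1) (fun x => r x * f x)]
    refine Finset.sum_congr rfl fun y _ => ?_
    refine Finset.sum_congr ?_ fun _ _ => rfl
    apply Finset.filter_congr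
    intro x _
    simp [funext_iff]
  rw [hfib p, hfib q]
  refine Finset.sum_congr rfl fun y _ => ?_
  refine hconstsum _ ?_ (h y)
  intro x hx x' hx'
  refine hf x x' fun s hs => ?_
  rw [(Finset.mem_filter.1 hx).2 ⟨s, hs⟩, (Finset.mem_filter.1 hx').2 ⟨s, hs⟩]

/-- **Clique-marginal matching implies maximum likelihood (Lemma 1).** If a
positive Gibbs distribution `p̂` over `C` has the same marginal as the empirical
distribution `p̃` on every clique `c ∈ C`, then `p̂` maximizes the expected
log-likelihood `p ↦ Σ_x p̃(x) log p(x)` over all positive Gibbs distributions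
over `C`. -/
theorem clique_marginal_matching_implies_ml
    {S : Type*} [Fintype S] [DecidableEq S] {V : S → Type*}
    [∀ s, Fintype (V s)] [∀ s, DecidableEq (V s)]
    (C : Finset (Finset S)) (hC : ∀ c ∈ C, c.Nonempty)
    (ptilde : (∀ s, V s) → ℝ)
    (hpt_nonneg : ∀ x, 0 ≤ ptilde x) (hpt_sum : ∑ x, ptilde x = 1)
    (phat : (∀ s, V s) → ℝ)
    (hphat : IsGibbsDistribution C phat)
    (hmatch : ∀ c ∈ C, ∀ y : ∀ s : c, V s, marginal phat c y = marginal ptilde c y) :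
    ∀ p : (∀ s, V s) → ℝ, IsGibbsDistribution C p →
      ∑ x, ptilde x * Real.log (p x) ≤ ∑ x, ptilde x * Real.log (phat x) := by
  classical
  intro p hp
  obtain ⟨Eh, Zh, hZh, hdeph, hformh, hsumh⟩ := hphat
  obtain ⟨E, Z, hZ, hdep, hform, hsum⟩ := hp
  -- positivity
  have hphat_pos : ∀ x, 0 < phat x := fun x => by
    rw [hformh x]; positivity
  have hp_pos : ∀ x, 0 < p x := fun x => by
    rw [hform x]; positivity
  -- log formula
  have hlog : ∀ (E' : Finset S → (∀ s, V s) → ℝ) (Z' : ℝ), 0 < Z' →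
      ∀ x : ∀ s, V s,
        Real.log ((1 / Z') * Real.exp (-(∑ c ∈ C, E' c x)))
          = -Real.log Z' - ∑ c ∈ C, E' c x := by
    intro E' Z' hZ' x
    rw [Real.log_mul (by positivity) (Real.exp_ne_zero _), Real.log_exp, one_div,
      Real.log_inv]
    ring
  -- expected log under any distribution r summing to 1
  have hexp : ∀ (r : (∀ s, V s) → ℝ), (∑ x, r x = 1) →
      ∀ (E' : Finset S → (∀ s, V s) → ℝ) (Z' : ℝ) (hZ' : 0 < Z')
        (q : (∀ s, V s) → ℝ)
        (hq : ∀ x, q x = (1 / Z') * Real.exp (-(∑ c ∈ C, E' c x))),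
        ∑ x, r x * Real.log (q x)
          = -Real.log Z' - ∑ c ∈ C, ∑ x, r x * E' c x := by
    intro r hr E' Z' hZ' q hq
    have : ∀ x, r x * Real.log (q x)
        = r x * (-Real.log Z') - ∑ c ∈ C, r x * E' c x := by
      intro x
      rw [hq x, hlog E' Z' hZ' x, ← Finset.mul_sum]
      ring
    rw [Finset.sum_congr rfl fun x _ => this x, Finset.sum_sub_distrib,
      ← Finset.sum_mul, hr, Finset.sum_comm]
    ring
  -- swap ptilde for phat in expectations
  have hswap : ∀ (E' : Finset S → (∀ s, V s) → ℝ), (∀ c ∈ C, DependsOnlyOn c (E' c)) →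
      ∀ c ∈ C, ∑ x, ptilde x * E' c x = ∑ x, phat x * E' c x := by
    intro E' hdep' c hc
    exact (sum_mul_eq_of_marginal_eq c phat ptilde (hmatch c hc) (E' c) (hdep' c hc)).symm
  have key : ∀ (E' : Finset S → (∀ s, V s) → ℝ) (Z' : ℝ) (hZ' : 0 < Z')
      (hdep' : ∀ c ∈ C, DependsOnlyOn c (E' c))
      (q : (∀ s, V s) → ℝ)
      (hq : ∀ x, q x = (1 / Z') * Real.exp (-(∑ c ∈ C, E' c x))),
      ∑ x, ptilde x * Real.log (q x) = ∑ x, phat x * Real.log (q x) := by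
    intro E' Z' hZ' hdep' q hq
    rw [hexp ptilde hpt_sum E' Z' hZ' q hq, hexp phat hsumh E' Z' hZ' q hq]
    exact congrArg (fun t => -Real.log Z' - t)
      (Finset.sum_congr rfl fun c hc => hswap E' hdep' c hc)
  rw [key E Z hZ hdep p hform, key Eh Zh hZh hdeph phat hformh]
  -- Gibbs inequality: ∑ phat log p ≤ ∑ phat log phat
  have gibbs : ∑ x, phat x * (Real.log (p x) - Real.log (phat x)) ≤ 0 := by
    have hle : ∀ x : ∀ s, V s,
        phat x * (Real.log (p x) - Real.log (phat x)) ≤ p x - phat x := by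
      intro x
      rw [← Real.log_div (hp_pos x).ne' (hphat_pos x).ne']
      have h1 : Real.log (p x / phat x) ≤ p x / phat x - 1 :=
        Real.log_le_sub_one_of_pos (div_pos (hp_pos x) (hphat_pos x))
      calc phat x * Real.log (p x / phat x)
          ≤ phat x * (p x / phat x - 1) :=
            mul_le_mul_of_nonneg_left h1 (hphat_pos x).le
        _ = p x - phat x := by rw [mul_sub, mul_one, mul_div_cancel₀ _ (hphat_pos x).ne']
    calc ∑ x, phat x * (Real.log (p x) - Real.log (phat x))
        ≤ ∑ x, (p x - phat x) := Finset.sum_le_sum fun x _ => hle x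
      _ = 0 := by rw [Finset.sum_sub_distrib, hsum, hsumh, sub_self]
  have := gibbs
  rw [Finset.sum_congr rfl (fun x _ => mul_sub (phat x) _ _), Finset.sum_sub_distrib] at this
  linarith
end

section
/- Explicit clique-marginal-matching estimate (Proposition 1): Let C be a finite collection of nonempty subsets of S, q ∈ C, and A_q its 1-neighborhood (so every c ∈ C satisfies either c ∩ q = ∅, hence c ⊆ S∖q, or c ⊆ A_q). Let p̃ be a probability distribution on configurations whose marginal p̃_{A_q∖q} is strictly positive, and define p̂(x) = p̃_{A_q}(x_{A_q})·p̃_{S∖q}(x_{S∖q}) / p̃_{A_q∖q}(x_{A_q∖q}). Then p̂ is a probability distribution on configurations (it is nonnegative and sums to one), and for every c ∈ C the marginal of p̂ on c equals the marginal of p̃ on c. -/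
open Finset

section Aux

variable {S : Type*} [Fintype S] [DecidableEq S] {V : S → Type*}
  [∀ s, Fintype (V s)] [∀ s, DecidableEq (V s)]

lemma marg_filter_eq (U : Finset S) (y : ∀ s : U, V s) :
    (Finset.univ.filter (fun x : ∀ s, V s => ∀ s : U, x s.1 = y s))
      = Finset.univ.filter (fun x : ∀ s, V s => U.restrict x = y) := by
  apply Finset.filter_congr
  intro x _
  simp [funext_iff, Finset.restrict]

lemma sum_marginal (p : (∀ s, V s) → ℝ) (U : Finset S) :
    ∑ y, marginal p U y = ∑ x, p x := by
  unfold marginal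
  simp only [marg_filter_eq]
  rw [Finset.sum_fiberwise_eq_sum_filter Finset.univ Finset.univ (U.restrict) p]
  simp

/-- Tower property: marginal on `c ⊆ U` from marginal on `U`. -/
lemma marginal_tower (p : (∀ s, V s) → ℝ) {c U : Finset S} (h : ∀ s ∈ c, s ∈ U)
    (y : ∀ s : c, V s) :
    marginal p c y
      = ∑ v ∈ Finset.univ.filter
          (fun v : ∀ s : U, V s => ∀ s : c, v ⟨s.1, h s.1 s.2⟩ = y s),
        marginal p U v := by
  unfold marginal
  simp only [marg_filter_eq]
  rw [Finset.sum_fiberwise_eq_sum_filter Finset.univ _ (U.restrict) p]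
  apply Finset.sum_congr _ (fun _ _ => rfl)
  apply Finset.filter_congr
  intro x _
  simp [funext_iff, Finset.restrict]

lemma marginal_eq_of_marginal_eq (p p' : (∀ s, V s) → ℝ) {c U : Finset S}
    (h : ∀ s ∈ c, s ∈ U) (hU : ∀ v, marginal p U v = marginal p' U v)
    (y : ∀ s : c, V s) : marginal p c y = marginal p' c y := by
  rw [marginal_tower p h, marginal_tower p' h]
  exact Finset.sum_congr rfl fun v _ => hU v

/-- Change of variables: summing a function of `x|_W` over `{x : x|_T = z}`
equals summing over `{v on W : v|_c = z|_c}` when `T ∪ W = S` and `c = T ∩ W`. -/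
lemma sum_restrict_change (T W c : Finset S) (hcov : ∀ s, s ∈ T ∨ s ∈ W)
    (hcT : ∀ s ∈ c, s ∈ T) (hcW : ∀ s ∈ c, s ∈ W) (hTWc : ∀ s, s ∈ T → s ∈ W → s ∈ c)
    (z : ∀ s : T, V s) (f : (∀ s : W, V s) → ℝ) :
    ∑ x ∈ Finset.univ.filter (fun x : ∀ s, V s => ∀ s : T, x s.1 = z s), f (W.restrict x)
      = ∑ v ∈ Finset.univ.filter
          (fun v : ∀ s : W, V s => ∀ s : c, v ⟨s.1, hcW s.1 s.2⟩ = z ⟨s.1, hcT s.1 s.2⟩),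
        f v := by
  apply Finset.sum_nbij' (i := fun x => W.restrict x)
    (j := fun v s => if h : s ∈ T then z ⟨s, h⟩ else v ⟨s, (hcov s).resolve_left h⟩)
  · intro x hx
    simp only [Finset.mem_filter, Finset.mem_univ, true_and] at hx ⊢
    intro s
    exact hx ⟨s.1, hcT s.1 s.2⟩
  · intro v hv
    simp only [Finset.mem_filter, Finset.mem_univ, true_and] at hv ⊢
    intro s
    simp [s.2]
  · intro x hx
    simp only [Finset.mem_filter, Finset.mem_univ, true_and] at hx
    funext s
    by_cases h : s ∈ T
    · simp only [dif_pos h]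
      exact (hx ⟨s, h⟩).symm
    · simp only [dif_neg h]
      rfl
  · intro v hv
    simp only [Finset.mem_filter, Finset.mem_univ, true_and] at hv
    funext s
    show (if h : s.1 ∈ T then z ⟨s.1, h⟩ else v ⟨s.1, _⟩) = v s
    by_cases h : s.1 ∈ T
    · simp only [dif_pos h]
      have := hv ⟨s.1, hTWc s.1 h s.2⟩
      rw [← this]
    · simp only [dif_neg h]
  · intro x hx
    rfl
end Aux

/-- **Explicit clique-marginal-matching estimate (Proposition 1).** For a
probability distribution `p̃` with strictly positive marginal on `A \ q`, the
estimate `p̂(x) = p̃_A(x_A) · p̃_{S∖q}(x_{S∖q}) / p̃_{A∖q}(x_{A∖q})` is itself a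
probability distribution, and its marginal on every clique `c ∈ C` equals the
marginal of `p̃` on `c`. -/
theorem explicit_clique_marginal_matching_estimate
    {S : Type*} [Fintype S] [DecidableEq S] {V : S → Type*}
    [∀ s, Fintype (V s)] [∀ s, DecidableEq (V s)]
    (C : Finset (Finset S)) (hC : ∀ c ∈ C, c.Nonempty)
    (q : Finset S) (hq : q ∈ C)
    (A : Finset S) (hA : A = (C.filter fun c => (c ∩ q).Nonempty).biUnion id)
    (ptilde : (∀ s, V s) → ℝ)
    (hpt_nonneg : ∀ x, 0 ≤ ptilde x) (hpt_sum : ∑ x, ptilde x = 1)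
    (hpos : ∀ z : ∀ s : (A \ q : Finset S), V s, 0 < marginal ptilde (A \ q) z)
    (phat : (∀ s, V s) → ℝ)
    (hphat : ∀ x, phat x =
      marginal ptilde A (A.restrict x) *
        marginal ptilde (Finset.univ \ q) ((Finset.univ \ q).restrict x) /
        marginal ptilde (A \ q) ((A \ q).restrict x)) :
    (∀ x, 0 ≤ phat x) ∧ (∑ x, phat x = 1) ∧
      ∀ c ∈ C, ∀ y : ∀ s : c, V s, marginal phat c y = marginal ptilde c y := by
  classical
  have hqA : ∀ s ∈ q, s ∈ A := by
    intro s hs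
    rw [hA]
    exact Finset.mem_biUnion.mpr ⟨q, Finset.mem_filter.mpr ⟨hq, by
      rw [Finset.inter_self]; exact hC q hq⟩, hs⟩
  have hAq_A : ∀ s ∈ A \ q, s ∈ A := fun s hs => (Finset.mem_sdiff.mp hs).1
  have hAq_W : ∀ s ∈ A \ q, s ∈ Finset.univ \ q := fun s hs =>
    Finset.mem_sdiff.mpr ⟨Finset.mem_univ s, (Finset.mem_sdiff.mp hs).2⟩
  have hcov1 : ∀ s, s ∈ A ∨ s ∈ Finset.univ \ q := by
    intro s
    by_cases h : s ∈ q
    · exact Or.inl (hqA s h)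
    · exact Or.inr (Finset.mem_sdiff.mpr ⟨Finset.mem_univ s, h⟩)
  have hcov2 : ∀ s, s ∈ Finset.univ \ q ∨ s ∈ A := fun s => (hcov1 s).symm
  have hint1 : ∀ s, s ∈ A → s ∈ Finset.univ \ q → s ∈ A \ q := fun s h1 h2 =>
    Finset.mem_sdiff.mpr ⟨h1, (Finset.mem_sdiff.mp h2).2⟩
  have hint2 : ∀ s, s ∈ Finset.univ \ q → s ∈ A → s ∈ A \ q := fun s h1 h2 =>
    Finset.mem_sdiff.mpr ⟨h2, (Finset.mem_sdiff.mp h1).2⟩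
  have marg_nonneg : ∀ (U : Finset S) (y : ∀ s : U, V s), 0 ≤ marginal ptilde U y := by
    intro U y
    exact Finset.sum_nonneg fun x _ => hpt_nonneg x
  -- marginal of phat on A agrees with ptilde
  have KA : ∀ y : ∀ s : (A : Finset S), V s, marginal phat A y = marginal ptilde A y := by
    intro y
    have hne : marginal ptilde (A \ q) (fun s => y ⟨s.1, hAq_A s.1 s.2⟩) ≠ 0 :=
      (hpos _).ne'
    have step : marginal phat A y
        = ∑ x ∈ Finset.univ.filter (fun x : ∀ s, V s => ∀ s : (A : Finset S), x s.1 = y s),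
            (marginal ptilde A y / marginal ptilde (A \ q) (fun s => y ⟨s.1, hAq_A s.1 s.2⟩))
              * marginal ptilde (Finset.univ \ q) ((Finset.univ \ q).restrict x) := by
      apply Finset.sum_congr rfl
      intro x hx
      simp only [Finset.mem_filter, Finset.mem_univ, true_and] at hx
      rw [hphat x]
      have h1 : A.restrict x = y := funext fun s => hx s
      have h2 : (A \ q).restrict x = fun s : (A \ q : Finset S) => y ⟨s.1, hAq_A s.1 s.2⟩ :=
        funext fun s => hx ⟨s.1, hAq_A s.1 s.2⟩
      rw [h1, h2]
      ring
    rw [show marginal phat A y = _ from step, ← Finset.mul_sum,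
      sum_restrict_change A (Finset.univ \ q) (A \ q) hcov1 hAq_A hAq_W hint1 y
        (marginal ptilde (Finset.univ \ q)),
      ← marginal_tower ptilde hAq_W (fun s => y ⟨s.1, hAq_A s.1 s.2⟩),
      div_mul_cancel₀ _ hne]
  -- marginal of phat on univ \ q agrees with ptilde
  have KB : ∀ y : ∀ s : (Finset.univ \ q : Finset S), V s,
      marginal phat (Finset.univ \ q) y = marginal ptilde (Finset.univ \ q) y := by
    intro y
    have hne : marginal ptilde (A \ q) (fun s => y ⟨s.1, hAq_W s.1 s.2⟩) ≠ 0 :=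
      (hpos _).ne'
    have step : marginal phat (Finset.univ \ q) y
        = ∑ x ∈ Finset.univ.filter
            (fun x : ∀ s, V s => ∀ s : (Finset.univ \ q : Finset S), x s.1 = y s),
            (marginal ptilde (Finset.univ \ q) y
              / marginal ptilde (A \ q) (fun s => y ⟨s.1, hAq_W s.1 s.2⟩))
              * marginal ptilde A (A.restrict x) := by
      apply Finset.sum_congr rfl
      intro x hx
      simp only [Finset.mem_filter, Finset.mem_univ, true_and] at hx
      rw [hphat x]
      have h1 : (Finset.univ \ q).restrict x = y := funext fun s => hx s
      have h2 : (A \ q).restrict x = fun s : (A \ q : Finset S) => y ⟨s.1, hAq_W s.1 s.2⟩ :=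
        funext fun s => hx ⟨s.1, hAq_W s.1 s.2⟩
      rw [h1, h2]
      ring
    rw [show marginal phat (Finset.univ \ q) y = _ from step, ← Finset.mul_sum,
      sum_restrict_change (Finset.univ \ q) A (A \ q) hcov2 hAq_W hAq_A hint2 y
        (marginal ptilde A),
      ← marginal_tower ptilde hAq_A (fun s => y ⟨s.1, hAq_W s.1 s.2⟩),
      div_mul_cancel₀ _ hne]
  refine ⟨?_, ?_, ?_⟩
  · intro x
    rw [hphat x]
    exact div_nonneg (mul_nonneg (marg_nonneg _ _) (marg_nonneg _ _)) (hpos _).le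
  · rw [← sum_marginal phat A]
    rw [Finset.sum_congr rfl fun y _ => KA y]
    rw [sum_marginal ptilde A]
    exact hpt_sum
  · intro c hc y
    by_cases hcq : (c ∩ q).Nonempty
    · have hsub : ∀ s ∈ c, s ∈ A := by
        intro s hs
        rw [hA]
        exact Finset.mem_biUnion.mpr ⟨c, Finset.mem_filter.mpr ⟨hc, hcq⟩, hs⟩
      exact marginal_eq_of_marginal_eq phat ptilde hsub KA y
    · have hsub : ∀ s ∈ c, s ∈ Finset.univ \ q := by
        intro s hs
        refine Finset.mem_sdiff.mpr ⟨Finset.mem_univ s, fun hsq => hcq ?_⟩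
        exact ⟨s, Finset.mem_inter.mpr ⟨hs, hsq⟩⟩
      exact marginal_eq_of_marginal_eq phat ptilde hsub KB y
end

section
/- Uniqueness of the maximum likelihood distribution in a Gibbs family: Let p̃ be a probability distribution on configurations and let F be the set of all positive Gibbs distributions over C. If p₁ ∈ F and p₂ ∈ F both maximize the expected log-likelihood p ↦ Σ_x p̃(x)·log p(x) over F, then p₁ = p₂ as distributions. -/
open Finset

/-- **Uniqueness of the maximum likelihood distribution in a Gibbs family.** If
two positive Gibbs distributions over `C` both maximize the expected
log-likelihood `p ↦ Σ_x p̃(x) log p(x)` over the family of all positive Gibbs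
distributions over `C`, then they are equal as distributions. -/
theorem ml_unique_in_gibbs_family
    {S : Type*} [Fintype S] [DecidableEq S] {V : S → Type*}
    [∀ s, Fintype (V s)] [∀ s, DecidableEq (V s)]
    (C : Finset (Finset S)) (hC : ∀ c ∈ C, c.Nonempty)
    (ptilde : (∀ s, V s) → ℝ)
    (hpt_nonneg : ∀ x, 0 ≤ ptilde x) (hpt_sum : ∑ x, ptilde x = 1)
    (p₁ p₂ : (∀ s, V s) → ℝ)
    (h₁ : IsGibbsDistribution C p₁) (h₂ : IsGibbsDistribution C p₂)
    (hmax₁ : ∀ p : (∀ s, V s) → ℝ, IsGibbsDistribution C p →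
      ∑ x, ptilde x * Real.log (p x) ≤ ∑ x, ptilde x * Real.log (p₁ x))
    (hmax₂ : ∀ p : (∀ s, V s) → ℝ, IsGibbsDistribution C p →
      ∑ x, ptilde x * Real.log (p x) ≤ ∑ x, ptilde x * Real.log (p₂ x)) :
    p₁ = p₂ := by
  obtain ⟨E₁, Z₁, hZ₁, hdep₁, hform₁, hsum₁⟩ := h₁
  obtain ⟨E₂, Z₂, hZ₂, hdep₂, hform₂, hsum₂⟩ := h₂
  have hp₁pos : ∀ x, 0 < p₁ x := fun x => by rw [hform₁ x]; positivity
  have hp₂pos : ∀ x, 0 < p₂ x := fun x => by rw [hform₂ x]; positivity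
  have huniv : (Finset.univ : Finset (∀ s, V s)).Nonempty := by
    by_contra h
    rw [Finset.not_nonempty_iff_eq_empty] at h
    rw [h, Finset.sum_empty] at hpt_sum
    exact one_ne_zero hpt_sum.symm
  set Z : ℝ := ∑ x, Real.sqrt (p₁ x * p₂ x) with hZdef
  have hZpos : 0 < Z :=
    Finset.sum_pos (fun x _ => Real.sqrt_pos.mpr (mul_pos (hp₁pos x) (hp₂pos x))) huniv
  set q : (∀ s, V s) → ℝ := fun x => Real.sqrt (p₁ x * p₂ x) / Z with hqdef
  have hqsum : ∑ x, q x = 1 := by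
    simp only [hqdef]
    rw [← Finset.sum_div, ← hZdef, div_self hZpos.ne']
  -- q is a Gibbs distribution
  have hsqrt_eq : ∀ x, Real.sqrt (p₁ x * p₂ x)
      = (1 / (Real.sqrt Z₁ * Real.sqrt Z₂)) *
        Real.exp (-((∑ c ∈ C, E₁ c x) + ∑ c ∈ C, E₂ c x) / 2) := by
    intro x
    have key : p₁ x * p₂ x = ((1 / (Real.sqrt Z₁ * Real.sqrt Z₂)) *
        Real.exp (-((∑ c ∈ C, E₁ c x) + ∑ c ∈ C, E₂ c x) / 2)) ^ 2 := by
      have e3 : Real.exp (-((∑ c ∈ C, E₁ c x) + ∑ c ∈ C, E₂ c x) / 2) ^ 2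
          = Real.exp (-(∑ c ∈ C, E₁ c x)) * Real.exp (-(∑ c ∈ C, E₂ c x)) := by
        rw [sq, ← Real.exp_add, ← Real.exp_add]
        congr 1; ring
      rw [mul_pow, e3, div_pow, one_pow, mul_pow,
        Real.sq_sqrt hZ₁.le, Real.sq_sqrt hZ₂.le, hform₁ x, hform₂ x]
      ring
    rw [key, Real.sqrt_sq (by positivity)]
  have hqGibbs : IsGibbsDistribution C q := by
    refine ⟨fun c x => (E₁ c x + E₂ c x) / 2, Z * (Real.sqrt Z₁ * Real.sqrt Z₂),
      by positivity, ?_, ?_, hqsum⟩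
    · intro c hc x y hxy
      simp only [hdep₁ c hc x y hxy, hdep₂ c hc x y hxy]
    · intro x
      have hsum' : ∑ c ∈ C, (E₁ c x + E₂ c x) / 2
          = ((∑ c ∈ C, E₁ c x) + ∑ c ∈ C, E₂ c x) / 2 := by
        rw [← Finset.sum_div, Finset.sum_add_distrib]
      simp only [hqdef, hsqrt_eq x, hsum']
      field_simp
  -- log of q
  have hlogq : ∀ x, Real.log (q x)
      = (Real.log (p₁ x) + Real.log (p₂ x)) / 2 - Real.log Z := by
    intro x
    have hprod : 0 < p₁ x * p₂ x := mul_pos (hp₁pos x) (hp₂pos x)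
    simp only [hqdef]
    rw [Real.log_div (Real.sqrt_pos.mpr hprod).ne' hZpos.ne',
      Real.log_sqrt hprod.le, Real.log_mul (hp₁pos x).ne' (hp₂pos x).ne']
  have hL₁₂ : ∑ x, ptilde x * Real.log (p₂ x) = ∑ x, ptilde x * Real.log (p₁ x) :=
    le_antisymm (hmax₁ p₂ ⟨E₂, Z₂, hZ₂, hdep₂, hform₂, hsum₂⟩)
      (hmax₂ p₁ ⟨E₁, Z₁, hZ₁, hdep₁, hform₁, hsum₁⟩)
  have hLq : ∑ x, ptilde x * Real.log (q x)
      = ∑ x, ptilde x * Real.log (p₁ x) - Real.log Z := by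
    have : ∀ x, ptilde x * Real.log (q x)
        = ptilde x * Real.log (p₁ x) / 2 + ptilde x * Real.log (p₂ x) / 2
          - ptilde x * Real.log Z := by
      intro x; rw [hlogq x]; ring
    simp_rw [this]
    rw [Finset.sum_sub_distrib, Finset.sum_add_distrib, ← Finset.sum_div,
      ← Finset.sum_div, hL₁₂, ← Finset.sum_mul, hpt_sum]
    ring
  have hZge : (1 : ℝ) ≤ Z := by
    have := hmax₁ q hqGibbs
    rw [hLq] at this
    have hlogZ : 0 ≤ Real.log Z := by linarith
    exact (Real.log_nonneg_iff hZpos).mp hlogZ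
  -- sum of squares argument
  have hsq : ∑ x, (Real.sqrt (p₁ x) - Real.sqrt (p₂ x)) ^ 2 = 2 - 2 * Z := by
    have expand : ∀ x, (Real.sqrt (p₁ x) - Real.sqrt (p₂ x)) ^ 2
        = p₁ x + p₂ x - 2 * Real.sqrt (p₁ x * p₂ x) := by
      intro x
      rw [sub_sq, Real.sq_sqrt (hp₁pos x).le, Real.sq_sqrt (hp₂pos x).le,
        Real.sqrt_mul (hp₁pos x).le]
      ring
    simp_rw [expand]
    rw [Finset.sum_sub_distrib, Finset.sum_add_distrib, hsum₁, hsum₂,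
      ← Finset.mul_sum, ← hZdef]
    ring
  have hsq0 : ∑ x, (Real.sqrt (p₁ x) - Real.sqrt (p₂ x)) ^ 2 = 0 := by
    have hle : ∑ x, (Real.sqrt (p₁ x) - Real.sqrt (p₂ x)) ^ 2 ≤ 0 := by
      rw [hsq]; linarith
    have hge : 0 ≤ ∑ x, (Real.sqrt (p₁ x) - Real.sqrt (p₂ x)) ^ 2 :=
      Finset.sum_nonneg fun x _ => sq_nonneg _
    linarith
  funext x
  have hx : (Real.sqrt (p₁ x) - Real.sqrt (p₂ x)) ^ 2 = 0 :=
    (Finset.sum_eq_zero_iff_of_nonneg (fun x _ => sq_nonneg _)).mp hsq0 x (Finset.mem_univ x)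
  have := sub_eq_zero.mp (sq_eq_zero_iff.mp hx)
  exact (Real.sqrt_inj (hp₁pos x).le (hp₂pos x).le).mp this
end

section
/- Equality of the clique-q normalized potentials of the joint and marginal maximum likelihood estimates (corollary to Theorem 2): Under the hypotheses of Theorem 2 (p̃ a strictly positive probability distribution on configurations, p̂(x) = p̃_{A_q}(x_{A_q})·p̃_{S∖q}(x_{S∖q})/p̃_{A_q∖q}(x_{A_q∖q}) belonging to the set F of all positive Gibbs distributions over C, and p* ∈ F a maximizer of p ↦ Σ_x p̃(x)·log p(x) over F), write p* with zero-normalized potentials: p*(x) = (1/Z)·exp(−Σ_c G_c(x_c)), the sum over all nonempty c ⊆ S with each G_c normalized with respect to zero, and write the marginal p̃_{A_q} with zero-normalized potentials: p̃_{A_q}(y) = (1/Z')·exp(−Σ_c H_c(y_c)), the sum over all nonempty c ⊆ A_q with each H_c normalized with respect to zero. Then G_q = H_q. -/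
open Finset

set_option linter.unusedSectionVars false
set_option maxHeartbeats 1000000

section aux
variable {S : Type*} [Fintype S] [DecidableEq S] {V : S → Type*}
    [∀ s, Fintype (V s)] [∀ s, DecidableEq (V s)] [∀ s, Zero (V s)]


/-- glue a configuration on `U` with one on `univ \ U`. -/
def glue (U : Finset S) (y : ∀ s : U, V s) (z : ∀ s : (Finset.univ \ U : Finset S), V s) :
    ∀ s, V s := fun s =>
  if h : s ∈ U then y ⟨s, h⟩ else z ⟨s, Finset.mem_sdiff.mpr ⟨Finset.mem_univ s, h⟩⟩

lemma glue_mem (U : Finset S) (y : ∀ s : U, V s) (z : ∀ s : (Finset.univ \ U : Finset S), V s)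
    {s : S} (h : s ∈ U) : glue U y z s = y ⟨s, h⟩ := by simp [glue, h]

lemma glue_not_mem (U : Finset S) (y : ∀ s : U, V s)
    (z : ∀ s : (Finset.univ \ U : Finset S), V s) {s : S} (h : s ∉ U) :
    glue U y z s = z ⟨s, Finset.mem_sdiff.mpr ⟨Finset.mem_univ s, h⟩⟩ := by simp [glue, h]

lemma restrict_glue_left (U : Finset S) (y : ∀ s : U, V s)
    (z : ∀ s : (Finset.univ \ U : Finset S), V s) : U.restrict (glue U y z) = y := by
  funext s; simp [Finset.restrict, glue, s.2]

lemma restrict_glue_right (U : Finset S) (y : ∀ s : U, V s)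
    (z : ∀ s : (Finset.univ \ U : Finset S), V s) :
    (Finset.univ \ U).restrict (glue U y z) = z := by
  funext s
  have hs : s.1 ∉ U := (Finset.mem_sdiff.mp s.2).2
  simp [Finset.restrict, glue, hs]

lemma glue_restrict (U : Finset S) (x : ∀ s, V s) :
    glue U (U.restrict x) ((Finset.univ \ U).restrict x) = x := by
  funext s; by_cases h : s ∈ U <;> simp [glue, h, Finset.restrict]

lemma sum_glue (U : Finset S) (f : (∀ s, V s) → ℝ) :
    ∑ x, f x = ∑ y : ∀ s : U, V s, ∑ z : ∀ s : (Finset.univ \ U : Finset S), V s,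
      f (glue U y z) := by
  have : ∑ x, f x =
      ∑ p : (∀ s : U, V s) × (∀ s : (Finset.univ \ U : Finset S), V s), f (glue U p.1 p.2) := by
    apply Fintype.sum_bijective (fun x => (U.restrict x, (Finset.univ \ U).restrict x))
    · constructor
      · intro a b hab
        have := congrArg (fun p => glue U p.1 p.2) hab
        simpa [glue_restrict] using this
      · intro p
        exact ⟨glue U p.1 p.2, by simp [restrict_glue_left, restrict_glue_right]⟩
    · intro x
      simp [glue_restrict]
  rw [this, Fintype.sum_prod_type]

lemma sum_glue_right (U : Finset S) (p : (∀ s, V s) → ℝ) (y : ∀ s : U, V s) :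
    ∑ z : ∀ s : (Finset.univ \ U : Finset S), V s, p (glue U y z) = marginal p U y := by
  unfold marginal
  refine Finset.sum_nbij' (fun z => glue U y z) (fun x => (Finset.univ \ U).restrict x)
    ?_ ?_ ?_ ?_ ?_
  · intro z _
    simp only [Finset.mem_filter, Finset.mem_univ, true_and]
    intro s; exact glue_mem U y z s.2
  · intro x _; exact Finset.mem_univ _
  · intro z _; exact restrict_glue_right U y z
  · intro x hx
    simp only [Finset.mem_filter, Finset.mem_univ, true_and] at hx
    funext s
    show glue U y _ s = x s
    by_cases h : s ∈ U
    · rw [glue_mem U y _ h]; exact (hx ⟨s, h⟩).symm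
    · rw [glue_not_mem U y _ h]; rfl
  · intro z _; rfl

lemma sum_glue_left (U : Finset S) (p : (∀ s, V s) → ℝ)
    (z : ∀ s : (Finset.univ \ U : Finset S), V s) :
    ∑ y : ∀ s : U, V s, p (glue U y z) = marginal p (Finset.univ \ U) z := by
  unfold marginal
  refine Finset.sum_nbij' (fun y => glue U y z) (fun x => U.restrict x) ?_ ?_ ?_ ?_ ?_
  · intro y _
    simp only [Finset.mem_filter, Finset.mem_univ, true_and]
    intro s; exact glue_not_mem U y z (Finset.mem_sdiff.mp s.2).2
  · intro x _; exact Finset.mem_univ _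
  · intro y _; exact restrict_glue_left U y z
  · intro x hx
    simp only [Finset.mem_filter, Finset.mem_univ, true_and] at hx
    funext s
    show glue U _ z s = x s
    by_cases h : s ∈ U
    · rw [glue_mem U _ z h]; rfl
    · rw [glue_not_mem U _ z h]
      exact (hx ⟨s, Finset.mem_sdiff.mpr ⟨Finset.mem_univ s, h⟩⟩).symm
  · intro y _; rfl

lemma marginal_pos {p : (∀ s, V s) → ℝ} (hp : ∀ x, 0 < p x) (U : Finset S) (x : ∀ s, V s) :
    0 < marginal p U (U.restrict x) := by
  unfold marginal
  apply Finset.sum_pos (fun i _ => hp i)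
  exact ⟨x, by simp [Finset.restrict]⟩



/-- Tower property, summing over the coordinates outside `A`. -/
lemma tower_right (p : (∀ s, V s) → ℝ) {q A : Finset S} (hqA : q ⊆ A) (y : ∀ s : A, V s)
    (z₀ : ∀ s : (Finset.univ \ A : Finset S), V s) :
    ∑ z : ∀ s : (Finset.univ \ A : Finset S), V s,
      marginal p (Finset.univ \ q) ((Finset.univ \ q).restrict (glue A y z))
      = marginal p (A \ q) ((A \ q).restrict (glue A y z₀)) := by
  unfold marginal
  have hR : ∀ x : ∀ s, V s,
      (∀ s : (A \ q : Finset S), x s.1 = (A \ q).restrict (glue A y z₀) s)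
      ↔ (∀ s : (A \ q : Finset S), x s.1 = y ⟨s.1, (Finset.mem_sdiff.mp s.2).1⟩) := by
    intro x
    apply forall_congr'
    intro s
    rw [show (A \ q).restrict (glue A y z₀) s = y ⟨s.1, (Finset.mem_sdiff.mp s.2).1⟩ from
      glue_mem A y z₀ (Finset.mem_sdiff.mp s.2).1]
  simp only [Finset.sum_filter]
  rw [Finset.sum_comm]
  apply Finset.sum_congr rfl
  intro x _
  by_cases h2 : ∀ s : (A \ q : Finset S), x s.1 = y ⟨s.1, (Finset.mem_sdiff.mp s.2).1⟩
  · rw [if_pos ((hR x).mpr h2)]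
    rw [Fintype.sum_eq_single ((Finset.univ \ A).restrict x)]
    · rw [if_pos]
      intro s
      simp only [Finset.restrict_def]
      have hsq : s.1 ∉ q := (Finset.mem_sdiff.mp s.2).2
      by_cases hA' : s.1 ∈ A
      · rw [glue_mem A y _ hA']
        exact h2 ⟨s.1, Finset.mem_sdiff.mpr ⟨hA', hsq⟩⟩
      · rw [glue_not_mem A y _ hA']
    · intro z hz
      rw [if_neg]
      intro hc
      apply hz
      funext s
      have hsA : s.1 ∉ A := (Finset.mem_sdiff.mp s.2).2
      have hsq : s.1 ∉ q := fun h => hsA (hqA h)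
      have := hc ⟨s.1, Finset.mem_sdiff.mpr ⟨Finset.mem_univ _, hsq⟩⟩
      simp only [Finset.restrict_def] at this ⊢
      rw [glue_not_mem A y z hsA] at this
      exact this.symm
  · rw [if_neg fun hc => h2 ((hR x).mp hc)]
    apply Finset.sum_eq_zero
    intro z _
    rw [if_neg]
    intro hc
    apply h2
    intro s
    have hsA : s.1 ∈ A := (Finset.mem_sdiff.mp s.2).1
    have hsq : s.1 ∉ q := (Finset.mem_sdiff.mp s.2).2
    have := hc ⟨s.1, Finset.mem_sdiff.mpr ⟨Finset.mem_univ _, hsq⟩⟩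
    simp only [Finset.restrict_def] at this
    rw [glue_mem A y z hsA] at this
    exact this

/-- Tower property, summing over the coordinates in `q`. -/
lemma tower_left (p : (∀ s, V s) → ℝ) {q A : Finset S} (hqA : q ⊆ A)
    (w : ∀ s : (Finset.univ \ q : Finset S), V s) (v₀ : ∀ s : q, V s) :
    ∑ v : ∀ s : q, V s, marginal p A (A.restrict (glue q v w))
      = marginal p (A \ q) ((A \ q).restrict (glue q v₀ w)) := by
  unfold marginal
  have hR : ∀ x : ∀ s, V s,
      (∀ s : (A \ q : Finset S), x s.1 = (A \ q).restrict (glue q v₀ w) s)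
      ↔ (∀ s : (A \ q : Finset S), x s.1
          = w ⟨s.1, Finset.mem_sdiff.mpr ⟨Finset.mem_univ _, (Finset.mem_sdiff.mp s.2).2⟩⟩) := by
    intro x
    apply forall_congr'
    intro s
    rw [show (A \ q).restrict (glue q v₀ w) s
        = w ⟨s.1, Finset.mem_sdiff.mpr ⟨Finset.mem_univ _, (Finset.mem_sdiff.mp s.2).2⟩⟩ from
      glue_not_mem q v₀ w (Finset.mem_sdiff.mp s.2).2]
  simp only [Finset.sum_filter]
  rw [Finset.sum_comm]
  apply Finset.sum_congr rfl
  intro x _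
  by_cases h2 : ∀ s : (A \ q : Finset S), x s.1
      = w ⟨s.1, Finset.mem_sdiff.mpr ⟨Finset.mem_univ _, (Finset.mem_sdiff.mp s.2).2⟩⟩
  · rw [if_pos ((hR x).mpr h2)]
    rw [Fintype.sum_eq_single (q.restrict x)]
    · rw [if_pos]
      intro s
      simp only [Finset.restrict_def]
      by_cases hq' : s.1 ∈ q
      · rw [glue_mem q _ w hq']
      · rw [glue_not_mem q _ w hq']
        exact h2 ⟨s.1, Finset.mem_sdiff.mpr ⟨s.2, hq'⟩⟩
    · intro v hv
      rw [if_neg]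
      intro hc
      apply hv
      funext s
      have := hc ⟨s.1, hqA s.2⟩
      simp only [Finset.restrict_def] at this ⊢
      rw [glue_mem q v w s.2] at this
      exact this.symm
  · rw [if_neg fun hc => h2 ((hR x).mp hc)]
    apply Finset.sum_eq_zero
    intro v _
    rw [if_neg]
    intro hc
    apply h2
    intro s
    have hsA : s.1 ∈ A := (Finset.mem_sdiff.mp s.2).1
    have hsq : s.1 ∉ q := (Finset.mem_sdiff.mp s.2).2
    have := hc ⟨s.1, hsA⟩
    simp only [Finset.restrict_def] at this
    rw [glue_not_mem q v w hsq] at this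
    exact this


lemma match_left (pt : (∀ s, V s) → ℝ) (hpt : ∀ x, 0 < pt x) {q A : Finset S} (hqA : q ⊆ A)
    (g : (∀ s, V s) → ℝ) (hg : DependsOnlyOn A g) :
    ∑ x, (marginal pt A (A.restrict x)
        * marginal pt (Finset.univ \ q) ((Finset.univ \ q).restrict x)
        / marginal pt (A \ q) ((A \ q).restrict x)) * g x
      = ∑ x, pt x * g x := by
  rw [sum_glue A (fun x => (marginal pt A (A.restrict x)
        * marginal pt (Finset.univ \ q) ((Finset.univ \ q).restrict x)
        / marginal pt (A \ q) ((A \ q).restrict x)) * g x),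
      sum_glue A (fun x => pt x * g x)]
  apply Finset.sum_congr rfl
  intro y _
  have h2 : ∀ z, (A \ q).restrict (glue A y z) = (A \ q).restrict (glue A y 0) := by
    intro z
    funext s
    simp only [Finset.restrict_def]
    rw [glue_mem A y z (Finset.mem_sdiff.mp s.2).1, glue_mem A y 0 (Finset.mem_sdiff.mp s.2).1]
  have h3 : ∀ z, g (glue A y z) = g (glue A y 0) := by
    intro z
    apply hg
    intro s hs
    rw [glue_mem A y z hs, glue_mem A y 0 hs]
  have hne : marginal pt (A \ q) ((A \ q).restrict (glue A y 0)) ≠ 0 :=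
    ne_of_gt (marginal_pos hpt _ _)
  calc ∑ z, (marginal pt A (A.restrict (glue A y z))
        * marginal pt (Finset.univ \ q) ((Finset.univ \ q).restrict (glue A y z))
        / marginal pt (A \ q) ((A \ q).restrict (glue A y z))) * g (glue A y z)
      = ∑ z, (marginal pt A y * g (glue A y 0)
          / marginal pt (A \ q) ((A \ q).restrict (glue A y 0)))
          * marginal pt (Finset.univ \ q) ((Finset.univ \ q).restrict (glue A y z)) := by
        apply Finset.sum_congr rfl
        intro z _
        rw [restrict_glue_left, h2, h3]
        ring
    _ = (marginal pt A y * g (glue A y 0)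
          / marginal pt (A \ q) ((A \ q).restrict (glue A y 0)))
          * marginal pt (A \ q) ((A \ q).restrict (glue A y 0)) := by
        rw [← Finset.mul_sum, tower_right pt hqA y 0]
    _ = marginal pt A y * g (glue A y 0) := div_mul_cancel₀ _ hne
    _ = ∑ z, pt (glue A y z) * g (glue A y z) := by
        rw [Finset.sum_congr rfl (fun z _ => by rw [h3])]
        rw [← Finset.sum_mul, sum_glue_right]

lemma match_right (pt : (∀ s, V s) → ℝ) (hpt : ∀ x, 0 < pt x) {q A : Finset S} (hqA : q ⊆ A)
    (g : (∀ s, V s) → ℝ) (hg : DependsOnlyOn (Finset.univ \ q) g) :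
    ∑ x, (marginal pt A (A.restrict x)
        * marginal pt (Finset.univ \ q) ((Finset.univ \ q).restrict x)
        / marginal pt (A \ q) ((A \ q).restrict x)) * g x
      = ∑ x, pt x * g x := by
  rw [sum_glue q (fun x => (marginal pt A (A.restrict x)
        * marginal pt (Finset.univ \ q) ((Finset.univ \ q).restrict x)
        / marginal pt (A \ q) ((A \ q).restrict x)) * g x),
      sum_glue q (fun x => pt x * g x), Finset.sum_comm, Finset.sum_comm (γ := ∀ s : q, V s)]
  apply Finset.sum_congr rfl
  intro w _
  have h2 : ∀ v, (A \ q).restrict (glue q v w) = (A \ q).restrict (glue q 0 w) := by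
    intro v
    funext s
    simp only [Finset.restrict_def]
    rw [glue_not_mem q v w (Finset.mem_sdiff.mp s.2).2,
        glue_not_mem q 0 w (Finset.mem_sdiff.mp s.2).2]
  have h3 : ∀ v, g (glue q v w) = g (glue q 0 w) := by
    intro v
    apply hg
    intro s hs
    have hs' : s ∉ q := (Finset.mem_sdiff.mp hs).2
    rw [glue_not_mem q v w hs', glue_not_mem q 0 w hs']
  have hne : marginal pt (A \ q) ((A \ q).restrict (glue q 0 w)) ≠ 0 :=
    ne_of_gt (marginal_pos hpt _ _)
  calc ∑ v, (marginal pt A (A.restrict (glue q v w))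
        * marginal pt (Finset.univ \ q) ((Finset.univ \ q).restrict (glue q v w))
        / marginal pt (A \ q) ((A \ q).restrict (glue q v w))) * g (glue q v w)
      = ∑ v, (marginal pt (Finset.univ \ q) w * g (glue q 0 w)
          / marginal pt (A \ q) ((A \ q).restrict (glue q 0 w)))
          * marginal pt A (A.restrict (glue q v w)) := by
        apply Finset.sum_congr rfl
        intro v _
        rw [restrict_glue_right, h2, h3]
        ring
    _ = (marginal pt (Finset.univ \ q) w * g (glue q 0 w)
          / marginal pt (A \ q) ((A \ q).restrict (glue q 0 w)))
          * marginal pt (A \ q) ((A \ q).restrict (glue q 0 w)) := by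
        rw [← Finset.mul_sum, tower_left pt hqA w 0]
    _ = marginal pt (Finset.univ \ q) w * g (glue q 0 w) := div_mul_cancel₀ _ hne
    _ = ∑ v, pt (glue q v w) * g (glue q v w) := by
        rw [Finset.sum_congr rfl (fun v _ => by rw [h3])]
        rw [← Finset.sum_mul, sum_glue_left]


lemma count_lemma (c q : Finset S) :
    ∑ b ∈ q.powerset, (if c ⊆ b then (-1:ℝ)^((q\b).card) else 0)
      = if c = q then 1 else 0 := by
  by_cases hcq : c ⊆ q
  · have h1 : ∑ b ∈ q.powerset, (if c ⊆ b then (-1:ℝ)^((q\b).card) else 0)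
        = ∑ d ∈ (q\c).powerset, (-1:ℝ)^d.card := by
      rw [← Finset.sum_filter]
      refine Finset.sum_nbij' (fun b => q \ b) (fun d => q \ d) ?_ ?_ ?_ ?_ ?_
      · intro b hb
        simp only [Finset.mem_filter, Finset.mem_powerset] at hb ⊢
        exact Finset.sdiff_subset_sdiff (le_refl q) hb.2
      · intro d hd
        simp only [Finset.mem_powerset] at hd
        simp only [Finset.mem_filter, Finset.mem_powerset]
        refine ⟨Finset.sdiff_subset, Finset.subset_sdiff.mpr ⟨hcq, ?_⟩⟩
        exact Finset.disjoint_left.mpr fun a hac had => (Finset.mem_sdiff.mp (hd had)).2 hac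
      · intro b hb
        simp only [Finset.mem_filter, Finset.mem_powerset] at hb
        exact Finset.sdiff_sdiff_eq_self hb.1
      · intro d hd
        simp only [Finset.mem_powerset] at hd
        exact Finset.sdiff_sdiff_eq_self (hd.trans Finset.sdiff_subset)
      · intro b _; rfl
    have h2 : (∑ d ∈ (q\c).powerset, (-1:ℝ)^d.card)
        = ((∑ d ∈ (q\c).powerset, (-1:ℤ)^d.card : ℤ) : ℝ) := by push_cast; rfl
    rw [h1, h2, Finset.sum_powerset_neg_one_pow_card]
    by_cases he : c = q
    · rw [if_pos he, if_pos (by rw [he, Finset.sdiff_self])]; norm_num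
    · rw [if_neg he, if_neg, Int.cast_zero]
      intro hemp
      exact he (le_antisymm hcq (Finset.sdiff_eq_empty_iff_subset.mp hemp))
  · rw [if_neg (fun h => hcq (le_of_eq h))]
    apply Finset.sum_eq_zero
    intro b hb
    rw [if_neg (fun h => hcq (h.trans (Finset.mem_powerset.mp hb)))]

lemma alt_sum_zero {q : Finset S} (hq : q.Nonempty) :
    ∑ b ∈ q.powerset, (-1:ℝ)^((q\b).card) = 0 := by
  have := count_lemma (∅ : Finset S) q
  simp only [Finset.empty_subset, if_true] at this
  rw [this, if_neg (fun h => (Finset.nonempty_iff_ne_empty.mp hq) h.symm)]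

lemma mobius_sum (T : Finset (Finset S)) (q : Finset S) (hqT : q ∈ T)
    (F : Finset S → ℝ) (L : Finset S → ℝ)
    (hL : ∀ b ∈ q.powerset, L b = ∑ c ∈ T, if c ⊆ b then F c else 0) :
    ∑ b ∈ q.powerset, (-1:ℝ)^((q\b).card) * L b = F q := by
  rw [Finset.sum_congr rfl (fun b hb => by rw [hL b hb])]
  have step : ∀ b ∈ q.powerset, (-1:ℝ)^((q\b).card) * (∑ c ∈ T, if c ⊆ b then F c else 0)
      = ∑ c ∈ T, (if c ⊆ b then (-1:ℝ)^((q\b).card) else 0) * F c := by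
    intro b _
    rw [Finset.mul_sum]
    apply Finset.sum_congr rfl
    intro c _
    split_ifs <;> ring
  rw [Finset.sum_congr rfl step, Finset.sum_comm]
  have step2 : ∀ c ∈ T, ∑ b ∈ q.powerset, (if c ⊆ b then (-1:ℝ)^((q\b).card) else 0) * F c
      = (if c = q then 1 else 0) * F c := by
    intro c _
    rw [← Finset.sum_mul, count_lemma]
  rw [Finset.sum_congr rfl step2]
  have step3 : ∀ c ∈ T, (if c = q then (1:ℝ) else 0) * F c = if c = q then F c else 0 := by
    intro c _; split_ifs <;> ring
  rw [Finset.sum_congr rfl step3, Finset.sum_ite_eq' T q F, if_pos hqT]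

lemma sum_mul_log (C : Finset (Finset S)) (pt ph r : (∀ s, V s) → ℝ)
    (E : Finset S → (∀ s, V s) → ℝ) (Zr : ℝ) (hZr : 0 < Zr)
    (hrep : ∀ x, r x = (1 / Zr) * Real.exp (-(∑ c ∈ C, E c x)))
    (hmatch : ∀ c ∈ C, ∑ x, ph x * E c x = ∑ x, pt x * E c x)
    (hptsum : ∑ x, pt x = 1) (hphsum : ∑ x, ph x = 1) :
    ∑ x, pt x * Real.log (r x) = ∑ x, ph x * Real.log (r x) := by
  have hlog : ∀ x, Real.log (r x) = -Real.log Zr - ∑ c ∈ C, E c x := by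
    intro x
    rw [hrep x, Real.log_mul (by positivity) (Real.exp_ne_zero _), Real.log_exp,
      one_div, Real.log_inv]
    ring
  have key : ∀ p : (∀ s, V s) → ℝ, (∑ x, p x = 1) →
      ∑ x, p x * Real.log (r x) = -Real.log Zr - ∑ c ∈ C, ∑ x, p x * E c x := by
    intro p hp
    simp only [hlog]
    have : ∀ x, p x * (-Real.log Zr - ∑ c ∈ C, E c x)
        = p x * (-Real.log Zr) - ∑ c ∈ C, p x * E c x := by
      intro x; rw [mul_sub, Finset.mul_sum]
    rw [Finset.sum_congr rfl (fun x _ => this x), Finset.sum_sub_distrib,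
      ← Finset.sum_mul, hp, Finset.sum_comm]
    ring
  rw [key pt hptsum, key ph hphsum]
  congr 1
  exact Finset.sum_congr rfl (fun c hc => by rw [hmatch c hc])

lemma maximizer_eq (ph pst : (∀ s, V s) → ℝ)
    (hph_pos : ∀ x, 0 < ph x) (hpst_pos : ∀ x, 0 < pst x)
    (hsum_ph : ∑ x, ph x = 1) (hsum_pst : ∑ x, pst x = 1)
    (hle : ∑ x, ph x * Real.log (ph x) ≤ ∑ x, ph x * Real.log (pst x)) :
    ∀ x, pst x = ph x := by
  set f : (∀ s, V s) → ℝ :=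
    fun x => ph x * (Real.log (pst x / ph x) - (pst x / ph x - 1)) with hf
  have hnonpos : ∀ x, f x ≤ 0 := by
    intro x
    apply mul_nonpos_of_nonneg_of_nonpos (le_of_lt (hph_pos x))
    have := Real.log_le_sub_one_of_pos (div_pos (hpst_pos x) (hph_pos x))
    linarith
  have hexp : ∀ x, f x = (ph x * Real.log (pst x) - ph x * Real.log (ph x))
      - (pst x - ph x) := by
    intro x
    show ph x * (Real.log (pst x / ph x) - (pst x / ph x - 1))
        = ph x * Real.log (pst x) - ph x * Real.log (ph x) - (pst x - ph x)
    rw [Real.log_div (ne_of_gt (hpst_pos x)) (ne_of_gt (hph_pos x)), mul_sub, mul_sub,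
      mul_sub, mul_div_cancel₀ _ (ne_of_gt (hph_pos x))]
    ring
  have hsumf : ∑ x, f x = 0 := by
    apply le_antisymm (Finset.sum_nonpos (fun x _ => hnonpos x))
    have : ∑ x, f x = ((∑ x, ph x * Real.log (pst x)) - ∑ x, ph x * Real.log (ph x))
        - ((∑ x, pst x) - ∑ x, ph x) := by
      rw [Finset.sum_congr rfl (fun x _ => hexp x)]
      rw [Finset.sum_sub_distrib, Finset.sum_sub_distrib, Finset.sum_sub_distrib]
    rw [this, hsum_ph, hsum_pst]
    linarith
  have hzero : ∀ x ∈ Finset.univ, f x = 0 :=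
    (Finset.sum_eq_zero_iff_of_nonpos (fun x _ => hnonpos x)).mp hsumf
  intro x
  have hx := hzero x (Finset.mem_univ x)
  rw [hf] at hx
  have hfac : Real.log (pst x / ph x) - (pst x / ph x - 1) = 0 := by
    rcases mul_eq_zero.mp hx with h | h
    · exact absurd h (ne_of_gt (hph_pos x))
    · exact h
  have ht : pst x / ph x = 1 := by
    by_contra hne
    have := Real.log_lt_sub_one_of_pos (div_pos (hpst_pos x) (hph_pos x)) hne
    linarith
  rw [div_eq_one_iff_eq (ne_of_gt (hph_pos x))] at ht
  exact ht

def pad (b : Finset S) (x : ∀ s, V s) : ∀ s, V s := fun s => if s ∈ b then x s else 0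

end aux

/-- **Equality of the clique-`q` normalized potentials of the joint and marginal
maximum likelihood estimates (corollary to Theorem 2).** Under the hypotheses of
Theorem 2, write the maximizer `p*` with zero-normalized potentials `G_c` over
all nonempty subsets `c ⊆ S`, and write the marginal `p̃_A` with zero-normalized
potentials `H_c` over all nonempty subsets `c ⊆ A`. Then `G_q = H_q`. -/
theorem joint_and_marginal_normalized_potentials_agree_on_q
    {S : Type*} [Fintype S] [DecidableEq S] {V : S → Type*}
    [∀ s, Fintype (V s)] [∀ s, DecidableEq (V s)] [∀ s, Zero (V s)]
    (C : Finset (Finset S)) (hC : ∀ c ∈ C, c.Nonempty)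
    (q : Finset S) (hq : q ∈ C)
    (A : Finset S) (hA : A = (C.filter fun c => (c ∩ q).Nonempty).biUnion id)
    (ptilde : (∀ s, V s) → ℝ)
    (hpt_pos : ∀ x, 0 < ptilde x) (hpt_sum : ∑ x, ptilde x = 1)
    (phat : (∀ s, V s) → ℝ)
    (hphat : ∀ x, phat x =
      marginal ptilde A (A.restrict x) *
        marginal ptilde (Finset.univ \ q) ((Finset.univ \ q).restrict x) /
        marginal ptilde (A \ q) ((A \ q).restrict x))
    (hphatF : IsGibbsDistribution C phat)
    (pstar : (∀ s, V s) → ℝ)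
    (hstar : IsGibbsDistribution C pstar)
    (hmax : ∀ p : (∀ s, V s) → ℝ, IsGibbsDistribution C p →
      ∑ x, ptilde x * Real.log (p x) ≤ ∑ x, ptilde x * Real.log (pstar x))
    (Z : ℝ) (hZ : 0 < Z)
    (G : Finset S → (∀ s, V s) → ℝ)
    (hGdep : ∀ c : Finset S, c.Nonempty → DependsOnlyOn c (G c))
    (hGnorm : ∀ c : Finset S, c.Nonempty → NormalizedZero c (G c))
    (hGrep : ∀ x, pstar x = (1 / Z) *
      Real.exp (-(∑ c ∈ Finset.univ.powerset.filter (fun c : Finset S => c.Nonempty), G c x)))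
    (Z' : ℝ) (hZ' : 0 < Z')
    (H : Finset S → (∀ s : A, V s) → ℝ)
    (hHdep : ∀ c : Finset S, c ⊆ A → c.Nonempty → DependsOnlyOnSub A c (H c))
    (hHnorm : ∀ c : Finset S, c ⊆ A → c.Nonempty → NormalizedZeroSub A c (H c))
    (hHrep : ∀ y : ∀ s : A, V s,
      marginal ptilde A y =
        (1 / Z') * Real.exp (-(∑ c ∈ A.powerset.filter (fun c => c.Nonempty), H c y))) :
    ∀ x : ∀ s, V s, G q x = H q (A.restrict x) := by
  have hqne : q.Nonempty := hC q hq
  have hqA : q ⊆ A := by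
    rw [hA]
    exact Finset.subset_biUnion_of_mem id
      (Finset.mem_filter.mpr ⟨hq, by rwa [Finset.inter_self]⟩)
  have hsplit : ∀ c ∈ C, c ⊆ A ∨ c ⊆ Finset.univ \ q := by
    intro c hc
    by_cases hcq : (c ∩ q).Nonempty
    · left; rw [hA]
      exact Finset.subset_biUnion_of_mem id (Finset.mem_filter.mpr ⟨hc, hcq⟩)
    · right
      intro a ha
      rw [Finset.mem_sdiff]
      exact ⟨Finset.mem_univ _, fun haq => hcq ⟨a, Finset.mem_inter.mpr ⟨ha, haq⟩⟩⟩
  have hphat_pos : ∀ x, 0 < phat x := by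
    intro x
    rw [hphat]
    exact div_pos (mul_pos (marginal_pos hpt_pos _ _) (marginal_pos hpt_pos _ _))
      (marginal_pos hpt_pos _ _)
  have hpstar_pos : ∀ x, 0 < pstar x := by
    intro x
    rw [hGrep]
    positivity
  obtain ⟨Eh, Zh, hZh, hEhdep, hEhrep, hphat_sum⟩ := hphatF
  obtain ⟨Es, Zs, hZs, hEsdep, hEsrep, hpstar_sum⟩ := hstar
  have hmatch : ∀ g : (∀ s, V s) → ℝ,
      DependsOnlyOn A g ∨ DependsOnlyOn (Finset.univ \ q) g →
      ∑ x, phat x * g x = ∑ x, ptilde x * g x := by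
    intro g hg
    have h0 : ∑ x, phat x * g x = ∑ x, (marginal ptilde A (A.restrict x)
        * marginal ptilde (Finset.univ \ q) ((Finset.univ \ q).restrict x)
        / marginal ptilde (A \ q) ((A \ q).restrict x)) * g x :=
      Finset.sum_congr rfl (fun x _ => by rw [hphat])
    rcases hg with hg | hg
    · rw [h0]; exact match_left ptilde hpt_pos hqA g hg
    · rw [h0]; exact match_right ptilde hpt_pos hqA g hg
  have hmatchC : ∀ E : Finset S → (∀ s, V s) → ℝ, (∀ c ∈ C, DependsOnlyOn c (E c)) →
      ∀ c ∈ C, ∑ x, phat x * E c x = ∑ x, ptilde x * E c x := by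
    intro E hE c hc
    apply hmatch
    rcases hsplit c hc with h | h
    · left; intro a b hab; exact hE c hc a b (fun s hs => hab s (h hs))
    · right; intro a b hab; exact hE c hc a b (fun s hs => hab s (h hs))
  have h1 : ∑ x, ptilde x * Real.log (pstar x) = ∑ x, phat x * Real.log (pstar x) :=
    sum_mul_log C ptilde phat pstar Es Zs hZs hEsrep (hmatchC Es hEsdep) hpt_sum hphat_sum
  have h2 : ∑ x, ptilde x * Real.log (phat x) = ∑ x, phat x * Real.log (phat x) :=
    sum_mul_log C ptilde phat phat Eh Zh hZh hEhrep (hmatchC Eh hEhdep) hpt_sum hphat_sum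
  have hle := hmax phat ⟨Eh, Zh, hZh, hEhdep, hEhrep, hphat_sum⟩
  rw [h1, h2] at hle
  have heq : ∀ x, pstar x = phat x :=
    maximizer_eq phat pstar hphat_pos hpstar_pos hphat_sum hpstar_sum hle
  -- Möbius inversion
  intro x
  have hqT₁ : q ∈ Finset.univ.powerset.filter (fun c : Finset S => c.Nonempty) :=
    Finset.mem_filter.mpr ⟨Finset.mem_powerset.mpr (Finset.subset_univ q), hqne⟩
  have hmobG : ∑ b ∈ q.powerset, (-1:ℝ)^((q\b).card)
      * (-(Real.log (Z * pstar (pad b x)))) = G q x := by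
    refine mobius_sum _ q hqT₁ (fun c => G c x)
      (fun b => -(Real.log (Z * pstar (pad b x)))) ?_
    intro b _
    have hZp : Z * pstar (pad b x) = Real.exp
        (-(∑ c ∈ Finset.univ.powerset.filter (fun c : Finset S => c.Nonempty),
          G c (pad b x))) := by
      rw [hGrep, ← mul_assoc, mul_one_div, div_self (ne_of_gt hZ), one_mul]
    simp only [hZp, Real.log_exp, neg_neg]
    apply Finset.sum_congr rfl
    intro c hc
    have hcne : c.Nonempty := (Finset.mem_filter.mp hc).2
    by_cases hcb : c ⊆ b
    · rw [if_pos hcb]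
      apply hGdep c hcne
      intro s hs
      simp [pad, hcb hs]
    · rw [if_neg hcb]
      apply hGnorm c hcne
      obtain ⟨t, htc, htb⟩ := Finset.not_subset.mp hcb
      exact ⟨t, htc, by simp [pad, htb]⟩
  have hqT₂ : q ∈ A.powerset.filter (fun c : Finset S => c.Nonempty) :=
    Finset.mem_filter.mpr ⟨Finset.mem_powerset.mpr hqA, hqne⟩
  have hmobH : ∑ b ∈ q.powerset, (-1:ℝ)^((q\b).card)
      * (-(Real.log (Z' * marginal ptilde A (A.restrict (pad b x)))))
      = H q (A.restrict x) := by
    refine mobius_sum _ q hqT₂ (fun c => H c (A.restrict x))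
      (fun b => -(Real.log (Z' * marginal ptilde A (A.restrict (pad b x))))) ?_
    intro b _
    have hZp : Z' * marginal ptilde A (A.restrict (pad b x)) = Real.exp
        (-(∑ c ∈ A.powerset.filter (fun c => c.Nonempty), H c (A.restrict (pad b x)))) := by
      rw [hHrep, ← mul_assoc, mul_one_div, div_self (ne_of_gt hZ'), one_mul]
    simp only [hZp, Real.log_exp, neg_neg]
    apply Finset.sum_congr rfl
    intro c hc
    have hcA : c ⊆ A := Finset.mem_powerset.mp (Finset.mem_filter.mp hc).1
    have hcne : c.Nonempty := (Finset.mem_filter.mp hc).2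
    by_cases hcb : c ⊆ b
    · rw [if_pos hcb]
      apply hHdep c hcA hcne
      intro s hs
      simp [Finset.restrict_def, pad, hcb hs]
    · rw [if_neg hcb]
      apply hHnorm c hcA hcne
      obtain ⟨t, htc, htb⟩ := Finset.not_subset.mp hcb
      exact ⟨⟨t, hcA htc⟩, htc, by simp [Finset.restrict_def, pad, htb]⟩
  rw [← hmobG, ← hmobH]
  set K : ℝ := Real.log Z - Real.log Z'
      + Real.log (marginal ptilde (Finset.univ \ q) ((Finset.univ \ q).restrict (pad ∅ x)))
      - Real.log (marginal ptilde (A \ q) ((A \ q).restrict (pad ∅ x))) with hK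
  have hconst : ∀ b ∈ q.powerset,
      Real.log (Z * pstar (pad b x))
        = Real.log (Z' * marginal ptilde A (A.restrict (pad b x))) + K := by
    intro b hb
    have hbq : b ⊆ q := Finset.mem_powerset.mp hb
    have e1 : (Finset.univ \ q).restrict (pad b x)
        = (Finset.univ \ q).restrict (pad ∅ x) := by
      funext s
      have hs : s.1 ∉ b := fun h => (Finset.mem_sdiff.mp s.2).2 (hbq h)
      simp [Finset.restrict_def, pad, hs]
    have e2 : (A \ q).restrict (pad b x) = (A \ q).restrict (pad ∅ x) := by
      funext s
      have hs : s.1 ∉ b := fun h => (Finset.mem_sdiff.mp s.2).2 (hbq h)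
      simp [Finset.restrict_def, pad, hs]
    have m1 := marginal_pos hpt_pos A (pad b x)
    have m2 := marginal_pos hpt_pos (Finset.univ \ q) (pad ∅ x)
    have m3 := marginal_pos hpt_pos (A \ q) (pad ∅ x)
    rw [heq (pad b x), hphat (pad b x), e1, e2, hK]
    rw [Real.log_mul (ne_of_gt hZ) (ne_of_gt (div_pos (mul_pos m1 m2) m3)),
      Real.log_div (ne_of_gt (mul_pos m1 m2)) (ne_of_gt m3),
      Real.log_mul (ne_of_gt m1) (ne_of_gt m2),
      Real.log_mul (ne_of_gt hZ') (ne_of_gt m1)]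
    ring
  calc ∑ b ∈ q.powerset, (-1:ℝ)^((q\b).card) * (-(Real.log (Z * pstar (pad b x))))
      = ∑ b ∈ q.powerset, ((-1:ℝ)^((q\b).card)
          * (-(Real.log (Z' * marginal ptilde A (A.restrict (pad b x)))))
          + (-K) * (-1:ℝ)^((q\b).card)) := by
        apply Finset.sum_congr rfl
        intro b hb
        rw [hconst b hb]
        ring
    _ = ∑ b ∈ q.powerset, (-1:ℝ)^((q\b).card)
          * (-(Real.log (Z' * marginal ptilde A (A.restrict (pad b x))))) := by
        rw [Finset.sum_add_distrib, ← Finset.mul_sum, alt_sum_zero hqne, mul_zero, add_zero]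
end

section
/- Population consistency of the LAP estimator: Let p be a positive Gibbs distribution over C with potentials (E_c)_{c∈C}, each normalized with respect to zero, and fix q ∈ C with 1-neighborhood A_q. Let G be any set of strictly positive probability distributions on configurations of A_q with p_{A_q} ∈ G. If r ∈ G maximizes r' ↦ Σ_y p_{A_q}(y)·log r'(y) over G, then r = p_{A_q}; consequently, writing r in its (unique) zero-normalized form r(y) = (1/Z')·exp(−Σ_c F_c(y_c)) with the sum over all nonempty c ⊆ A_q and each F_c normalized with respect to zero, one has F_q = E_q. -/
open Finset

lemma alt_sum_zero_s12 {S : Type*} [DecidableEq S] (q : Finset S) (t : S) (ht : t ∈ q)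
    (f : Finset S → ℝ) (hf : ∀ b ⊆ q, t ∉ b → f (insert t b) = f b) :
    ∑ b ∈ q.powerset, (-1 : ℝ) ^ b.card * f b = 0 := by
  have h1 : q = insert t (q.erase t) := (Finset.insert_erase ht).symm
  rw [h1, Finset.sum_powerset_insert (Finset.notMem_erase t q), ← Finset.sum_add_distrib]
  apply Finset.sum_eq_zero
  intro b hb
  rw [Finset.mem_powerset] at hb
  have htb : t ∉ b := fun h => Finset.notMem_erase t q (hb h)
  rw [Finset.card_insert_of_notMem htb,
    hf b (hb.trans (Finset.erase_subset t q)) htb, pow_succ]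
  ring

lemma mobius_clique {S : Type*} [DecidableEq S] {V : S → Type*} [∀ s, Zero (V s)]
    (q c : Finset S) (E : (∀ s, V s) → ℝ)
    (hdep : DependsOnlyOn c E) (hnorm : NormalizedZero c E)
    (x : ∀ s, V s) :
    ∑ b ∈ q.powerset, (-1:ℝ)^b.card * E (fun s => if s ∈ b then x s else 0)
      = if c = q then (-1:ℝ)^q.card * E x else 0 := by
  by_cases hqc : q ⊆ c
  · by_cases hcq : c = q
    · subst hcq
      rw [if_pos rfl, Finset.sum_eq_single_of_mem c (Finset.mem_powerset_self c)]
      · congr 1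
        apply hdep
        intro s hs
        simp [hs]
      · intro b hb hbc
        rw [Finset.mem_powerset] at hb
        obtain ⟨t, htq, htb⟩ : ∃ t ∈ c, t ∉ b := by
          rcases Finset.not_subset.mp (fun h => hbc (Finset.Subset.antisymm hb h)) with ⟨t, ht, ht2⟩
          exact ⟨t, ht, ht2⟩
        rw [hnorm _ ⟨t, htq, by simp [htb]⟩, mul_zero]
    · rw [if_neg hcq]
      apply Finset.sum_eq_zero
      intro b hb
      rw [Finset.mem_powerset] at hb
      obtain ⟨t, htc, htq⟩ : ∃ t ∈ c, t ∉ q := by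
        rcases Finset.not_subset.mp (fun h => hcq (Finset.Subset.antisymm h hqc)) with ⟨t, ht, ht2⟩
        exact ⟨t, ht, ht2⟩
      have htb : t ∉ b := fun h => htq (hb h)
      rw [hnorm _ ⟨t, htc, by simp [htb]⟩, mul_zero]
  · obtain ⟨t, htq, htc⟩ : ∃ t ∈ q, t ∉ c := by
      rcases Finset.not_subset.mp hqc with ⟨t, ht, ht2⟩
      exact ⟨t, ht, ht2⟩
    rw [if_neg (fun h : c = q => htc (by rw [h]; exact htq))]
    apply alt_sum_zero_s12 q t htq
    intro b hb htb
    apply hdep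
    intro s hs
    have hst : s ≠ t := fun h => htc (h ▸ hs)
    simp [Finset.mem_insert, hst]

lemma gibbs_eq {ι : Type*} [Fintype ι] (m r : ι → ℝ)
    (hm : ∀ y, 0 < m y) (hr : ∀ y, 0 < r y)
    (hms : ∑ y, m y = 1) (hrs : ∑ y, r y = 1)
    (hge : ∑ y, m y * Real.log (m y) ≤ ∑ y, m y * Real.log (r y)) :
    r = m := by
  have key : ∀ y, 0 ≤ (r y - m y) - (m y * Real.log (r y) - m y * Real.log (m y)) := by
    intro y
    have hlog : Real.log (r y / m y) = Real.log (r y) - Real.log (m y) :=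
      Real.log_div (hr y).ne' (hm y).ne'
    have h1 : Real.log (r y / m y) ≤ r y / m y - 1 :=
      Real.log_le_sub_one_of_pos (div_pos (hr y) (hm y))
    have h2 : m y * Real.log (r y / m y) ≤ m y * (r y / m y - 1) :=
      mul_le_mul_of_nonneg_left h1 (hm y).le
    have hdiv : m y * (r y / m y - 1) = r y - m y := by
      rw [mul_sub, mul_div_cancel₀ _ (hm y).ne', mul_one]
    have e1 : m y * Real.log (r y / m y) = m y * Real.log (r y) - m y * Real.log (m y) := by
      rw [hlog]; ring
    linarith
  have hsum : ∑ y, ((r y - m y) - (m y * Real.log (r y) - m y * Real.log (m y))) = 0 := by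
    have h0 : ∑ y, ((r y - m y) - (m y * Real.log (r y) - m y * Real.log (m y)))
        = (∑ y, r y - ∑ y, m y) - (∑ y, m y * Real.log (r y) - ∑ y, m y * Real.log (m y)) := by
      rw [← Finset.sum_sub_distrib, ← Finset.sum_sub_distrib, ← Finset.sum_sub_distrib]
    have h1 : 0 ≤ ∑ y, ((r y - m y) - (m y * Real.log (r y) - m y * Real.log (m y))) :=
      Finset.sum_nonneg (fun y _ => key y)
    rw [h0, hrs, hms]
    rw [h0, hrs, hms] at h1
    linarith
  have hzero := (Finset.sum_eq_zero_iff_of_nonneg (fun y _ => key y)).mp hsum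
  funext y
  have hy := hzero y (Finset.mem_univ y)
  by_contra hne
  have ht1 : r y / m y ≠ 1 := fun h => hne ((div_eq_one_iff_eq (hm y).ne').mp h)
  have hstrict : Real.log (r y / m y) < r y / m y - 1 :=
    Real.log_lt_sub_one_of_pos (div_pos (hr y) (hm y)) ht1
  have h2 : m y * Real.log (r y / m y) < m y * (r y / m y - 1) :=
    (mul_lt_mul_iff_right₀ (hm y)).mpr hstrict
  have hdiv : m y * (r y / m y - 1) = r y - m y := by
    rw [mul_sub, mul_div_cancel₀ _ (hm y).ne', mul_one]
  have e1 : m y * Real.log (r y / m y) = m y * Real.log (r y) - m y * Real.log (m y) := by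
    rw [Real.log_div (hr y).ne' (hm y).ne']; ring
  linarith


/-- **Population consistency of the LAP estimator.** Let `p` be a positive Gibbs
distribution over `C` with zero-normalized potentials `E_c`, let `q ∈ C` have
1-neighborhood `A`, and let `G` be any set of strictly positive probability
distributions on configurations of `A` containing the marginal `p_A`. If `r ∈ G`
maximizes the population log-likelihood `r' ↦ Σ_y p_A(y) log r'(y)` over `G`,
then `r = p_A`; consequently, in any zero-normalized Gibbs representation
`r(y) = (1/Z') exp(−Σ_c F_c(y_c))` of `r` (sum over all nonempty `c ⊆ A`), the
potential assigned to `q` equals `E_q`. -/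
theorem lap_population_consistency
    {S : Type*} [Fintype S] [DecidableEq S] {V : S → Type*}
    [∀ s, Fintype (V s)] [∀ s, DecidableEq (V s)] [∀ s, Zero (V s)]
    (C : Finset (Finset S)) (hC : ∀ c ∈ C, c.Nonempty)
    (E : Finset S → (∀ s, V s) → ℝ)
    (hEdep : ∀ c ∈ C, DependsOnlyOn c (E c))
    (hEnorm : ∀ c ∈ C, NormalizedZero c (E c))
    (Z : ℝ) (hZ : 0 < Z)
    (p : (∀ s, V s) → ℝ)
    (hp : ∀ x, p x = (1 / Z) * Real.exp (-(∑ c ∈ C, E c x)))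
    (hp_sum : ∑ x, p x = 1)
    (q : Finset S) (hq : q ∈ C)
    (A : Finset S) (hA : A = (C.filter fun c => (c ∩ q).Nonempty).biUnion id)
    (G : Set ((∀ s : A, V s) → ℝ))
    (hG : ∀ g ∈ G, (∀ y, 0 < g y) ∧ (∑ y, g y = 1))
    (hmem : marginal p A ∈ G)
    (r : (∀ s : A, V s) → ℝ) (hr : r ∈ G)
    (hrmax : ∀ g ∈ G,
      ∑ y, marginal p A y * Real.log (g y) ≤ ∑ y, marginal p A y * Real.log (r y)) :
    r = marginal p A ∧
    ∀ (Z' : ℝ) (F : Finset S → (∀ s : A, V s) → ℝ), 0 < Z' →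
      (∀ c : Finset S, c ⊆ A → c.Nonempty → DependsOnlyOnSub A c (F c)) →
      (∀ c : Finset S, c ⊆ A → c.Nonempty → NormalizedZeroSub A c (F c)) →
      (∀ y : ∀ s : A, V s,
        r y = (1 / Z') * Real.exp (-(∑ c ∈ A.powerset.filter (fun c => c.Nonempty), F c y))) →
      ∀ x : ∀ s, V s, F q (A.restrict x) = E q x := by
  obtain ⟨hmpos, hmsum⟩ := hG _ hmem
  obtain ⟨hrpos, hrsum⟩ := hG _ hr
  have hreq : r = marginal p A :=
    gibbs_eq (marginal p A) r hmpos hrpos hmsum hrsum (hrmax _ hmem)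
  refine ⟨hreq, ?_⟩
  intro Z' F hZ' hFdep hFnorm hrep x
  obtain ⟨t0, ht0⟩ := hC q hq
  have hCA : ∀ c ∈ C, (c ∩ q).Nonempty → c ⊆ A := by
    intro c hc hcq
    rw [hA]
    exact Finset.subset_biUnion_of_mem id (Finset.mem_filter.mpr ⟨hc, hcq⟩)
  have hqA : q ⊆ A := hCA q hq (by rw [Finset.inter_self]; exact hC q hq)
  set zbx : Finset S → (∀ s, V s) := fun b s => if s ∈ b then x s else 0 with hzbx
  set C1 := C.filter (fun c => (c ∩ q).Nonempty) with hC1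
  set C2 := C.filter (fun c => ¬(c ∩ q).Nonempty) with hC2
  set filt : Finset S → Finset (∀ s, V s) :=
    fun b => Finset.univ.filter (fun x' : ∀ s, V s => ∀ s : A, x' s.1 = (A.restrict (zbx b)) s)
    with hfilt
  set W : ℝ := (1 / Z) * ∑ x' ∈ filt ∅, Real.exp (-(∑ c ∈ C2, E c x')) with hW
  have hWpos : 0 < W := by
    apply mul_pos (by positivity)
    apply Finset.sum_pos (fun _ _ => Real.exp_pos _)
    exact ⟨zbx ∅, Finset.mem_filter.mpr ⟨Finset.mem_univ _, fun s => rfl⟩⟩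
  -- marginal factorization
  have hmB : ∀ b ⊆ q, marginal p A (A.restrict (zbx b)) =
      Real.exp (-(∑ c ∈ C1, E c (zbx b))) * W := by
    intro b hb
    have hmarg : marginal p A (A.restrict (zbx b)) = ∑ x' ∈ filt b, p x' := rfl
    rw [hmarg]
    have hsplit : ∀ x' ∈ filt b,
        p x' = Real.exp (-(∑ c ∈ C1, E c (zbx b))) * ((1 / Z) * Real.exp (-(∑ c ∈ C2, E c x'))) := by
      intro x' hx'
      rw [hfilt, Finset.mem_filter] at hx'
      have hagree : ∀ s ∈ A, x' s = zbx b s := fun s hs => hx'.2 ⟨s, hs⟩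
      have hC1eq : ∑ c ∈ C1, E c x' = ∑ c ∈ C1, E c (zbx b) := by
        apply Finset.sum_congr rfl
        intro c hc
        rw [hC1, Finset.mem_filter] at hc
        exact hEdep c hc.1 x' (zbx b) (fun s hs => hagree s (hCA c hc.1 hc.2 hs))
      rw [hp, ← Finset.sum_filter_add_sum_filter_not C (fun c => (c ∩ q).Nonempty) (fun c => E c x'),
        ← hC1, ← hC2, hC1eq, neg_add, Real.exp_add]
      ring
    rw [Finset.sum_congr rfl hsplit, ← Finset.mul_sum, hW, ← Finset.mul_sum]
    congr 2
    -- bijection between filt b and filt ∅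
    apply Finset.sum_bij' (i := fun x' _ => fun s => if s ∈ q then 0 else x' s)
      (j := fun x'' _ => fun s => if s ∈ q then zbx b s else x'' s)
    · intro x' hx'
      rw [hfilt, Finset.mem_filter] at hx' ⊢
      refine ⟨Finset.mem_univ _, fun s => ?_⟩
      have h0 : (A.restrict (zbx ∅)) s = (0 : V s.1) := by simp [hzbx, Finset.restrict]
      rw [h0]
      by_cases hsq : s.1 ∈ q
      · simp [hsq]
      · have := hx'.2 s
        have hzb : (A.restrict (zbx b)) s = (0 : V s.1) := by
          have hsb : s.1 ∉ b := fun h => hsq (hb h)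
          simp [hzbx, Finset.restrict, hsb]
        show (if s.1 ∈ q then (0:V s.1) else x' s.1) = 0
        rw [if_neg hsq, this, hzb]
    · intro x'' hx''
      rw [hfilt, Finset.mem_filter] at hx'' ⊢
      refine ⟨Finset.mem_univ _, fun s => ?_⟩
      show (if s.1 ∈ q then zbx b s.1 else x'' s.1) = (A.restrict (zbx b)) s
      by_cases hsq : s.1 ∈ q
      · rw [if_pos hsq]
        rfl
      · have := hx''.2 s
        have h0 : (A.restrict (zbx ∅)) s = (0 : V s.1) := by simp [hzbx, Finset.restrict]
        have hzb : (A.restrict (zbx b)) s = (0 : V s.1) := by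
          have hsb : s.1 ∉ b := fun h => hsq (hb h)
          simp [hzbx, Finset.restrict, hsb]
        rw [if_neg hsq, this, h0, hzb]

    · intro x' hx'
      rw [hfilt, Finset.mem_filter] at hx'
      funext s
      by_cases hsq : s ∈ q
      · simp only [hsq, if_pos]
        have := hx'.2 ⟨s, hqA hsq⟩
        exact this.symm
      · simp [hsq]
    · intro x'' hx''
      rw [hfilt, Finset.mem_filter] at hx''
      funext s
      by_cases hsq : s ∈ q
      · simp only [hsq, if_pos]
        have := hx''.2 ⟨s, hqA hsq⟩
        have h0 : (A.restrict (zbx ∅)) (⟨s, hqA hsq⟩ : A) = (0 : V s) := by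
          simp [hzbx, Finset.restrict]
        rw [this, h0]
      · simp [hsq]
    · intro x' hx'
      congr 1
      congr 1
      apply Finset.sum_congr rfl
      intro c hc
      rw [hC2, Finset.mem_filter] at hc
      apply hEdep c hc.1
      intro s hs
      have hsq : s ∉ q := by
        intro hsq
        exact hc.2 ⟨s, Finset.mem_inter.mpr ⟨hs, hsq⟩⟩
      simp [hsq]
  have hlogm : ∀ b ⊆ q, Real.log (marginal p A (A.restrict (zbx b)))
      = -(∑ c ∈ C1, E c (zbx b)) + Real.log W := by
    intro b hb
    rw [hmB b hb, Real.log_mul (Real.exp_ne_zero _) hWpos.ne', Real.log_exp]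
  set cliqs := A.powerset.filter (fun c => c.Nonempty) with hcliqs
  have hHF : ∀ y' : ∀ s : A, V s,
      (∑ c ∈ cliqs, F c y') = -Real.log Z' - Real.log (marginal p A y') := by
    intro y'
    have h1 : marginal p A y' = (1 / Z') * Real.exp (-(∑ c ∈ cliqs, F c y')) := by
      rw [← hreq]; exact hrep y'
    rw [h1, Real.log_mul (by positivity) (Real.exp_ne_zero _), Real.log_exp, one_div,
      Real.log_inv]
    ring
  -- F side Möbius
  have hqcliqs : q ∈ cliqs := Finset.mem_filter.mpr ⟨Finset.mem_powerset.mpr hqA, hC q hq⟩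
  have hFside : ∑ b ∈ q.powerset, (-1:ℝ)^b.card * (∑ c ∈ cliqs, F c (A.restrict (zbx b)))
      = (-1:ℝ)^q.card * F q (A.restrict x) := by
    simp_rw [Finset.mul_sum]
    rw [Finset.sum_comm]
    have hper : ∀ c ∈ cliqs, ∑ b ∈ q.powerset, (-1:ℝ)^b.card * F c (A.restrict (zbx b))
        = if c = q then (-1:ℝ)^q.card * F q (A.restrict x) else 0 := by
      intro c hc
      rw [hcliqs, Finset.mem_filter, Finset.mem_powerset] at hc
      have hdep' : DependsOnlyOn c (fun x' => F c (A.restrict x')) := by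
        intro u v huv
        exact hFdep c hc.1 hc.2 _ _ (fun s hs => huv s.1 hs)
      have hnorm' : NormalizedZero c (fun x' => F c (A.restrict x')) := by
        intro u ⟨t, htc, htu⟩
        exact hFnorm c hc.1 hc.2 _ ⟨⟨t, hc.1 htc⟩, htc, htu⟩
      have := mobius_clique q c (fun x' => F c (A.restrict x')) hdep' hnorm' x
      rw [this]
      by_cases hceq : c = q
      · subst hceq; simp
      · simp [hceq]
    rw [Finset.sum_congr rfl hper, Finset.sum_ite_eq' cliqs q (fun _ => (-1:ℝ)^q.card * F q (A.restrict x)), if_pos hqcliqs]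
  -- E side Möbius
  have hEside : ∑ b ∈ q.powerset, (-1:ℝ)^b.card * (∑ c ∈ cliqs, F c (A.restrict (zbx b)))
      = (-1:ℝ)^q.card * E q x := by
    have hterm : ∀ b ∈ q.powerset, (∑ c ∈ cliqs, F c (A.restrict (zbx b)))
        = (∑ c ∈ C1, E c (zbx b)) + (-Real.log Z' - Real.log W) := by
      intro b hb
      rw [hHF, hlogm b (Finset.mem_powerset.mp hb)]
      ring
    rw [Finset.sum_congr rfl (fun b hb => by rw [hterm b hb])]
    simp_rw [mul_add]
    rw [Finset.sum_add_distrib]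
    have hconst : ∑ b ∈ q.powerset, (-1:ℝ)^b.card * (-Real.log Z' - Real.log W) = 0 :=
      alt_sum_zero_s12 q t0 ht0 _ (fun _ _ _ => rfl)
    rw [hconst, add_zero]
    simp_rw [Finset.mul_sum]
    rw [Finset.sum_comm]
    have hqC1 : q ∈ C1 := Finset.mem_filter.mpr ⟨hq, by rw [Finset.inter_self]; exact hC q hq⟩
    have hper : ∀ c ∈ C1, ∑ b ∈ q.powerset, (-1:ℝ)^b.card * E c (zbx b)
        = if c = q then (-1:ℝ)^q.card * E q x else 0 := by
      intro c hc
      rw [hC1, Finset.mem_filter] at hc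
      have := mobius_clique q c (E c) (hEdep c hc.1) (hEnorm c hc.1) x
      rw [this]
      by_cases hceq : c = q
      · subst hceq; simp
      · simp [hceq]
    rw [Finset.sum_congr rfl hper, Finset.sum_ite_eq' C1 q (fun _ => (-1:ℝ)^q.card * E q x), if_pos hqC1]
  have hfinal := hFside.symm.trans hEside
  have hne : ((-1:ℝ)^q.card) ≠ 0 := pow_ne_zero _ (by norm_num)
  exact mul_left_cancel₀ hne hfinal
end
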